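/- arXiv:0810.2154 — 4 statements merged into one kernel-verified Lean document; each statement's English description precedes it below -/
import Mathlib

section
/- For any irreducible finite set 𝒜 of real m×m matrices, any averaging function γ, any initial norm ‖·‖_0 on ℝ^m and any vector e with ‖e‖_0 = 1, the max-relaxation iteration satisfies: the sequence {ρ⁻_n} is nondecreasing, the sequence {ρ⁺_n} is nonincreasing, and ρ⁻_n ≤ ρ(𝒜) ≤ ρ⁺_n for every n ≥ 0. -/
open Matrix Filter Topology Bornology Pointwise

/-- `N` is a norm on `ℝ^m`: nonnegative, definite, absolutely homogeneous, subadditive. -/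
def IsNorm {m : ℕ} (N : (Fin m → ℝ) → ℝ) : Prop :=
  (∀ x, 0 ≤ N x) ∧ (∀ x, N x = 0 → x = 0) ∧
    (∀ (t : ℝ) (x), N (t • x) = |t| * N x) ∧ (∀ x y, N (x + y) ≤ N x + N y)

/-- `N` is a seminorm on `ℝ^m`. -/
def IsSeminorm {m : ℕ} (N : (Fin m → ℝ) → ℝ) : Prop :=
  (∀ x, 0 ≤ N x) ∧
    (∀ (t : ℝ) (x), N (t • x) = |t| * N x) ∧ (∀ x y, N (x + y) ≤ N x + N y)

/-- The family `A` is irreducible: the matrices have no common invariant subspace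
other than `⊥` and `⊤`. -/
def IsIrreducibleFamily {m r : ℕ} (A : Fin r → Matrix (Fin m) (Fin m) ℝ) : Prop :=
  ∀ W : Submodule ℝ (Fin m → ℝ), (∀ i, ∀ x ∈ W, (A i).mulVec x ∈ W) → W = ⊥ ∨ W = ⊤

/-- The operator norm of a matrix acting on `ℝ^m` (with its sup norm). -/
noncomputable def matNorm {m : ℕ} (M : Matrix (Fin m) (Fin m) ℝ) : ℝ :=
  ‖LinearMap.toContinuousLinearMap M.mulVecLin‖

/-- The joint spectral radius of the family `A`:
`limsup_n (max over words of length n of the norm of the product)^(1/n)`. -/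
noncomputable def jsr {m r : ℕ} (A : Fin r → Matrix (Fin m) (Fin m) ℝ) : ℝ :=
  Filter.atTop.limsup fun n : ℕ =>
    (⨆ w : Fin n → Fin r, matNorm (List.ofFn fun k => A (w k)).prod) ^ (1 / (n : ℝ))

/-- `maxA A N x = max_i N (A_i x)`. -/
noncomputable def maxA {m r : ℕ} (A : Fin r → Matrix (Fin m) (Fin m) ℝ)
    (N : (Fin m → ℝ) → ℝ) (x : Fin m → ℝ) : ℝ :=
  ⨆ i, N ((A i).mulVec x)

/-- `ρ⁺ = max_{x ≠ 0} (max_i N (A_i x)) / N x`. -/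
noncomputable def rhoSup {m r : ℕ} (A : Fin r → Matrix (Fin m) (Fin m) ℝ)
    (N : (Fin m → ℝ) → ℝ) : ℝ :=
  sSup ((fun x => maxA A N x / N x) '' {x | x ≠ 0})

/-- `ρ⁻ = min_{x ≠ 0} (max_i N (A_i x)) / N x`. -/
noncomputable def rhoInf {m r : ℕ} (A : Fin r → Matrix (Fin m) (Fin m) ℝ)
    (N : (Fin m → ℝ) → ℝ) : ℝ :=
  sInf ((fun x => maxA A N x / N x) '' {x | x ≠ 0})

/-- An averaging function: continuous on positives, `γ t t = t`, and strictly
between `min` and `max` off the diagonal. -/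
def IsAveraging (γ : ℝ → ℝ → ℝ) : Prop :=
  ContinuousOn (fun p : ℝ × ℝ => γ p.1 p.2) {p | 0 < p.1 ∧ 0 < p.2} ∧
    (∀ t, 0 < t → γ t t = t) ∧
    ∀ t s, 0 < t → 0 < s → t ≠ s → min t s < γ t s ∧ γ t s < max t s

/-- The max-relaxation iteration: `‖x‖_{n+1} = max (‖x‖_n, γ_n⁻¹ max_i ‖A_i x‖_n)`
where `γ_n = γ (ρ⁻_n, ρ⁺_n)`. -/
noncomputable def iterN {m r : ℕ} (A : Fin r → Matrix (Fin m) (Fin m) ℝ)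
    (γ : ℝ → ℝ → ℝ) (N0 : (Fin m → ℝ) → ℝ) : ℕ → (Fin m → ℝ) → ℝ
  | 0 => N0
  | n + 1 => fun x =>
      max (iterN A γ N0 n x)
        ((γ (rhoInf A (iterN A γ N0 n)) (rhoSup A (iterN A γ N0 n)))⁻¹ *
          maxA A (iterN A γ N0 n) x)

/-- The normalized norms `‖x‖°_n = ‖x‖_n / ‖e‖_n` of the max-relaxation iteration
(for `n = 0` this equals `‖x‖_0` since `‖e‖_0 = 1`). -/
noncomputable def iterNnorm {m r : ℕ} (A : Fin r → Matrix (Fin m) (Fin m) ℝ)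
    (γ : ℝ → ℝ → ℝ) (N0 : (Fin m → ℝ) → ℝ) (e : Fin m → ℝ) (n : ℕ) :
    (Fin m → ℝ) → ℝ :=
  fun x => iterN A γ N0 n x / iterN A γ N0 n e

/-- `e⁺(N, N') = max_{x ≠ 0} N x / N' x`. -/
noncomputable def ePlus {m : ℕ} (N N' : (Fin m → ℝ) → ℝ) : ℝ :=
  sSup ((fun x => N x / N' x) '' {x | x ≠ 0})

/-- `e⁻(N, N') = min_{x ≠ 0} N x / N' x`. -/
noncomputable def eMinus {m : ℕ} (N N' : (Fin m → ℝ) → ℝ) : ℝ :=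
  sInf ((fun x => N x / N' x) '' {x | x ≠ 0})

/-- The eccentricity of the norm `N` with respect to the norm `N'`. -/
noncomputable def ecc {m : ℕ} (N N' : (Fin m → ℝ) → ℝ) : ℝ :=
  ePlus N N' / eMinus N N'

namespace Stmt0Aux

variable {m : ℕ} {N : (Fin m → ℝ) → ℝ}

lemma isNorm_zero (hN : IsNorm N) : N 0 = 0 := by
  have := hN.2.2.1 0 0
  simpa using this

lemma isNorm_pos (hN : IsNorm N) {x : Fin m → ℝ} (hx : x ≠ 0) : 0 < N x :=
  lt_of_le_of_ne (hN.1 x) fun h => hx (hN.2.1 x h.symm)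

lemma isNorm_sum_le (hN : IsNorm N) {ι : Type*} (s : Finset ι) (f : ι → Fin m → ℝ) :
    N (∑ i ∈ s, f i) ≤ ∑ i ∈ s, N (f i) := by
  classical
  induction s using Finset.induction with
  | empty => simp [isNorm_zero hN]
  | @insert a s hx ih =>
    rw [Finset.sum_insert hx, Finset.sum_insert hx]
    exact (hN.2.2.2 _ _).trans (by linarith)

lemma isNorm_upper (hN : IsNorm N) : ∃ C : ℝ, 0 < C ∧ ∀ x, N x ≤ C * ‖x‖ := by
  classical
  set b : Fin m → (Fin m → ℝ) := fun i => Pi.single i (1:ℝ) with hb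
  have hpos : (0:ℝ) < (∑ i : Fin m, N (b i)) + 1 := by
    have : (0:ℝ) ≤ ∑ i : Fin m, N (b i) := Finset.sum_nonneg fun i _ => hN.1 _
    linarith
  refine ⟨(∑ i : Fin m, N (b i)) + 1, hpos, fun x => ?_⟩
  have hx : x = ∑ i : Fin m, (x i) • b i := by
    funext j
    simp [hb, Finset.sum_apply, Pi.single_apply, mul_comm]
  calc N x = N (∑ i : Fin m, (x i) • b i) := by rw [← hx]
    _ ≤ ∑ i : Fin m, N ((x i) • b i) := isNorm_sum_le hN _ _
    _ = ∑ i : Fin m, |x i| * N (b i) := by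
        refine Finset.sum_congr rfl fun i _ => ?_
        exact hN.2.2.1 (x i) (b i)
    _ ≤ ∑ i : Fin m, ‖x‖ * N (b i) := by
        refine Finset.sum_le_sum fun i _ => ?_
        exact mul_le_mul_of_nonneg_right (by simpa [Real.norm_eq_abs] using norm_le_pi_norm x i) (hN.1 _)
    _ = (∑ i : Fin m, N (b i)) * ‖x‖ := by rw [← Finset.mul_sum, mul_comm]
    _ ≤ ((∑ i : Fin m, N (b i)) + 1) * ‖x‖ := by
        have : (0:ℝ) ≤ ‖x‖ := norm_nonneg x
        nlinarith

lemma isNorm_abs_sub (hN : IsNorm N) (x y : Fin m → ℝ) : |N x - N y| ≤ N (x - y) := by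
  have h1 : N x ≤ N y + N (x - y) := by
    have := hN.2.2.2 y (x - y); simpa using this
  have h2 : N y ≤ N x + N (x - y) := by
    have := hN.2.2.2 x (y - x)
    have hneg : N (y - x) = N (x - y) := by
      have := hN.2.2.1 (-1) (x - y); simpa [neg_sub] using this
    simpa [hneg] using this
  rw [abs_sub_le_iff]; constructor <;> linarith

lemma isNorm_continuous (hN : IsNorm N) : Continuous N := by
  obtain ⟨C, hC, hCle⟩ := isNorm_upper hN
  refine (LipschitzWith.of_dist_le_mul (K := ⟨C, hC.le⟩) fun x y => ?_).continuous
  have := (isNorm_abs_sub hN x y).trans (hCle (x - y))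
  rw [Real.dist_eq, dist_eq_norm]
  exact this

lemma isNorm_lower (hm : 1 ≤ m) (hN : IsNorm N) : ∃ c : ℝ, 0 < c ∧ ∀ x, c * ‖x‖ ≤ N x := by
  haveI : Nonempty (Fin m) := ⟨⟨0, by omega⟩⟩
  have hsph : (Metric.sphere (0 : Fin m → ℝ) 1).Nonempty :=
    NormedSpace.sphere_nonempty.mpr zero_le_one
  obtain ⟨x₀, hx₀mem, hx₀min⟩ := (isCompact_sphere (0 : Fin m → ℝ) 1).exists_isMinOn hsph
    (isNorm_continuous hN).continuousOn
  have hx₀ : ‖x₀‖ = 1 := by simpa using hx₀mem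
  have hx₀ne : x₀ ≠ 0 := by intro h; rw [h] at hx₀; simp at hx₀
  refine ⟨N x₀, isNorm_pos hN hx₀ne, fun x => ?_⟩
  rcases eq_or_ne x 0 with rfl | hx
  · simp [isNorm_zero hN]
  · have hnx : (0:ℝ) < ‖x‖ := norm_pos_iff.mpr hx
    set u := ‖x‖⁻¹ • x with hu
    have humem : u ∈ Metric.sphere (0 : Fin m → ℝ) 1 := by
      simp [hu, norm_smul, abs_of_pos (inv_pos.mpr hnx), inv_mul_cancel₀ hnx.ne']
    have h1 : N x₀ ≤ N u := hx₀min humem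
    have h2 : N x = ‖x‖ * N u := by
      have hxu : x = ‖x‖ • u := by rw [hu, smul_smul, mul_inv_cancel₀ hnx.ne', one_smul]
      conv_lhs => rw [hxu]
      rw [hN.2.2.1, abs_of_pos hnx]
    rw [h2, mul_comm]
    exact mul_le_mul_of_nonneg_left h1 hnx.le



variable {m r : ℕ} {N : (Fin m → ℝ) → ℝ} {A : Fin r → Matrix (Fin m) (Fin m) ℝ}

-- matNorm facts
lemma matNorm_nonneg (M : Matrix (Fin m) (Fin m) ℝ) : 0 ≤ matNorm M := norm_nonneg _

lemma mulVec_norm_le (M : Matrix (Fin m) (Fin m) ℝ) (x : Fin m → ℝ) :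
    ‖M.mulVec x‖ ≤ matNorm M * ‖x‖ := by
  have := (LinearMap.toContinuousLinearMap M.mulVecLin).le_opNorm x
  simpa [matNorm, Matrix.mulVecLin_apply] using this

lemma matNorm_le_bound (M : Matrix (Fin m) (Fin m) ℝ) {K : ℝ} (hK : 0 ≤ K)
    (h : ∀ x, ‖M.mulVec x‖ ≤ K * ‖x‖) : matNorm M ≤ K := by
  refine ContinuousLinearMap.opNorm_le_bound _ hK fun x => ?_
  simpa [Matrix.mulVecLin_apply] using h x

lemma le_matNorm_of_unit (M : Matrix (Fin m) (Fin m) ℝ) {x : Fin m → ℝ} (hx : ‖x‖ = 1) :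
    ‖M.mulVec x‖ ≤ matNorm M := by
  have := mulVec_norm_le M x
  simpa [hx] using this

-- maxA facts
variable [Nonempty (Fin r)]

lemma N_mulVec_le_maxA (x : Fin m → ℝ) (i : Fin r) : N ((A i).mulVec x) ≤ maxA A N x := by
  unfold maxA
  exact le_ciSup (f := fun i => N ((A i).mulVec x)) (Set.Finite.bddAbove (Set.finite_range _)) i

lemma maxA_nonneg (hN : ∀ x, 0 ≤ N x) (x : Fin m → ℝ) : 0 ≤ maxA A N x :=
  (hN _).trans (N_mulVec_le_maxA x (Classical.arbitrary _))

lemma maxA_le {x : Fin m → ℝ} {c : ℝ} (h : ∀ i, N ((A i).mulVec x) ≤ c) : maxA A N x ≤ c := by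
  unfold maxA
  exact ciSup_le h

lemma maxA_exists (x : Fin m → ℝ) : ∃ i, maxA A N x = N ((A i).mulVec x) := by
  obtain ⟨i, hi⟩ := Finite.exists_max fun i => N ((A i).mulVec x)
  exact ⟨i, le_antisymm (maxA_le hi) (N_mulVec_le_maxA x i)⟩

lemma maxA_smul (hN : ∀ (t : ℝ) (x), N (t • x) = |t| * N x) (t : ℝ) (x : Fin m → ℝ) :
    maxA A N (t • x) = |t| * maxA A N x := by
  unfold maxA
  have h : ∀ i : Fin r, N ((A i).mulVec (t • x)) = |t| * N ((A i).mulVec x) := by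
    intro i
    rw [Matrix.mulVec_smul, hN]
  simp_rw [h]
  rcases eq_or_ne t 0 with rfl | ht
  · simp [ciSup_const]
  · exact (Real.mul_iSup_of_nonneg (abs_nonneg t) _).symm

lemma maxA_add (hN : IsNorm N) (x y : Fin m → ℝ) :
    maxA A N (x + y) ≤ maxA A N x + maxA A N y := by
  refine maxA_le fun i => ?_
  rw [Matrix.mulVec_add]
  exact (hN.2.2.2 _ _).trans (add_le_add (N_mulVec_le_maxA x i) (N_mulVec_le_maxA y i))

lemma maxA_zero (hN : IsNorm N) : maxA A N 0 = 0 := by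
  unfold maxA
  have h : ∀ i : Fin r, N ((A i).mulVec 0) = 0 := by
    intro i
    rw [Matrix.mulVec_zero]
    have := hN.2.2.1 0 0
    simpa using this
  simp_rw [h]
  exact ciSup_const


-- ratio set facts
lemma ratio_mem (x : Fin m → ℝ) (hx : x ≠ 0) :
    maxA A N x / N x ∈ (fun x => maxA A N x / N x) '' {x | x ≠ 0} :=
  ⟨x, hx, rfl⟩

lemma ratio_nonempty (hm : 1 ≤ m) :
    ((fun x => maxA A N x / N x) '' {x | x ≠ 0}).Nonempty := by
  haveI : Nonempty (Fin m) := ⟨⟨0, by omega⟩⟩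
  refine ⟨_, ratio_mem (fun _ => 1) ?_⟩
  intro h
  have := congrFun h (Classical.arbitrary _)
  simp at this

lemma ratio_bddBelow (hN : IsNorm N) :
    BddBelow ((fun x => maxA A N x / N x) '' {x | x ≠ 0}) := by
  refine ⟨0, fun y hy => ?_⟩
  obtain ⟨x, _, rfl⟩ := hy
  exact div_nonneg (maxA_nonneg hN.1 x) (hN.1 x)

lemma ratio_bddAbove (hm : 1 ≤ m) (hN : IsNorm N) :
    BddAbove ((fun x => maxA A N x / N x) '' {x | x ≠ 0}) := by
  obtain ⟨c, hc, hcle⟩ := isNorm_lower hm hN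
  obtain ⟨C, hC, hCle⟩ := isNorm_upper hN
  refine ⟨(C * (∑ i : Fin r, matNorm (A i))) / c, fun y hy => ?_⟩
  obtain ⟨x, hx, rfl⟩ := hy
  have hNx : 0 < N x := isNorm_pos hN hx
  rw [div_le_div_iff₀ hNx hc]
  have h1 : maxA A N x ≤ C * (∑ i : Fin r, matNorm (A i)) * ‖x‖ := by
    refine maxA_le fun i => ?_
    calc N ((A i).mulVec x) ≤ C * ‖(A i).mulVec x‖ := hCle _
      _ ≤ C * (matNorm (A i) * ‖x‖) := by
          exact mul_le_mul_of_nonneg_left (mulVec_norm_le _ _) hC.le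
      _ ≤ C * ((∑ j : Fin r, matNorm (A j)) * ‖x‖) := by
          refine mul_le_mul_of_nonneg_left (mul_le_mul_of_nonneg_right ?_ (norm_nonneg x)) hC.le
          exact Finset.single_le_sum (fun j _ => matNorm_nonneg (A j)) (Finset.mem_univ i)
      _ = C * (∑ j : Fin r, matNorm (A j)) * ‖x‖ := by ring
  calc maxA A N x * c ≤ (C * (∑ i : Fin r, matNorm (A i)) * ‖x‖) * c :=
        mul_le_mul_of_nonneg_right h1 hc.le
    _ = C * (∑ i : Fin r, matNorm (A i)) * (c * ‖x‖) := by ring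
    _ ≤ C * (∑ i : Fin r, matNorm (A i)) * N x := by
        exact mul_le_mul_of_nonneg_left (hcle x) (mul_nonneg hC.le (Finset.sum_nonneg fun j _ => matNorm_nonneg _))

lemma rhoInf_nonneg (hm : 1 ≤ m) (hN : IsNorm N) : 0 ≤ rhoInf A N :=
  le_csInf (ratio_nonempty hm) (by
    rintro b ⟨x, _, rfl⟩
    exact div_nonneg (maxA_nonneg hN.1 x) (hN.1 x))

lemma rhoSup_nonneg (hm : 1 ≤ m) (hN : IsNorm N) : 0 ≤ rhoSup A N := by
  obtain ⟨b, hb⟩ := ratio_nonempty (N := N) (A := A) hm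
  have h0 : 0 ≤ b := by
    obtain ⟨x, _, rfl⟩ := hb
    exact div_nonneg (maxA_nonneg hN.1 x) (hN.1 x)
  exact h0.trans (le_csSup (ratio_bddAbove hm hN) hb)

lemma rhoInf_mul_le (hm : 1 ≤ m) (hN : IsNorm N) (x : Fin m → ℝ) :
    rhoInf A N * N x ≤ maxA A N x := by
  rcases eq_or_ne x 0 with rfl | hx
  · rw [isNorm_zero hN, maxA_zero hN, mul_zero]
  · have hNx : 0 < N x := isNorm_pos hN hx
    have := csInf_le (ratio_bddBelow hN) (ratio_mem (N := N) (A := A) x hx)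
    rw [le_div_iff₀ hNx] at this
    exact this

lemma maxA_le_rhoSup_mul (hm : 1 ≤ m) (hN : IsNorm N) (x : Fin m → ℝ) :
    maxA A N x ≤ rhoSup A N * N x := by
  rcases eq_or_ne x 0 with rfl | hx
  · rw [isNorm_zero hN, maxA_zero hN, mul_zero]
  · have hNx : 0 < N x := isNorm_pos hN hx
    have := le_csSup (ratio_bddAbove hm hN) (ratio_mem (N := N) (A := A) x hx)
    rw [div_le_iff₀ hNx] at this
    exact this

-- the step lemma
lemma step_isNorm (hN : IsNorm N) {β : ℝ} (hβ : 0 ≤ β) :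
    IsNorm (fun x => max (N x) (β * maxA A N x)) := by
  refine ⟨fun x => (hN.1 x).trans (le_max_left _ _), fun x hx => ?_, fun t x => ?_, fun x y => ?_⟩
  · exact hN.2.1 x (le_antisymm (hx ▸ le_max_left _ _) (hN.1 x))
  · show max (N (t • x)) (β * maxA A N (t • x)) = |t| * max (N x) (β * maxA A N x)
    rw [hN.2.2.1, maxA_smul hN.2.2.1]
    rw [show β * (|t| * maxA A N x) = |t| * (β * maxA A N x) by ring]
    exact (mul_max_of_nonneg _ _ (abs_nonneg t)).symm
  · refine max_le ?_ ?_
    · exact (hN.2.2.2 x y).trans (add_le_add (le_max_left _ _) (le_max_left _ _))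
    · calc β * maxA A N (x + y) ≤ β * (maxA A N x + maxA A N y) :=
            mul_le_mul_of_nonneg_left (maxA_add hN x y) hβ
        _ = β * maxA A N x + β * maxA A N y := by ring
        _ ≤ _ := add_le_add (le_max_right _ _) (le_max_right _ _)

lemma step_rhoInf (hm : 1 ≤ m) (hN : IsNorm N) {β : ℝ} (hβ : 0 ≤ β) :
    rhoInf A N ≤ rhoInf A (fun x => max (N x) (β * maxA A N x)) := by
  set N' := fun x => max (N x) (β * maxA A N x) with hN'def
  have hN' : IsNorm N' := step_isNorm hN hβ
  set p := rhoInf A N with hp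
  refine le_csInf (ratio_nonempty hm) ?_
  rintro b ⟨x, hx, rfl⟩
  have hN'x : 0 < N' x := isNorm_pos hN' hx
  rw [le_div_iff₀ hN'x]
  -- key: p * N' x ≤ maxA A N' x
  have key1 : maxA A N x ≤ maxA A N' x :=
    maxA_le fun i => (le_max_left _ _).trans (N_mulVec_le_maxA (N := N') x i)
  have key2 : β * (p * maxA A N x) ≤ maxA A N' x := by
    obtain ⟨i, hi⟩ := maxA_exists (N := N) (A := A) x
    calc β * (p * maxA A N x) = β * (p * N ((A i).mulVec x)) := by rw [hi]
      _ ≤ β * maxA A N ((A i).mulVec x) :=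
          mul_le_mul_of_nonneg_left (rhoInf_mul_le hm hN _) hβ
      _ ≤ N' ((A i).mulVec x) := le_max_right _ _
      _ ≤ maxA A N' x := N_mulVec_le_maxA (N := N') x i
  have hp0 : 0 ≤ p := rhoInf_nonneg hm hN
  have h1 : p * N x ≤ maxA A N' x := (rhoInf_mul_le hm hN x).trans key1
  have h2 : p * (β * maxA A N x) ≤ maxA A N' x := by
    rw [show p * (β * maxA A N x) = β * (p * maxA A N x) by ring]
    exact key2
  calc p * N' x = max (p * N x) (p * (β * maxA A N x)) := mul_max_of_nonneg _ _ hp0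
    _ ≤ maxA A N' x := max_le h1 h2

lemma step_rhoSup (hm : 1 ≤ m) (hN : IsNorm N) {β : ℝ} (hβ : 0 ≤ β) :
    rhoSup A (fun x => max (N x) (β * maxA A N x)) ≤ rhoSup A N := by
  set N' := fun x => max (N x) (β * maxA A N x) with hN'def
  have hN' : IsNorm N' := step_isNorm hN hβ
  set q := rhoSup A N with hq
  have hq0 : 0 ≤ q := rhoSup_nonneg hm hN
  refine csSup_le (ratio_nonempty hm) ?_
  rintro b ⟨x, hx, rfl⟩
  have hN'x : 0 < N' x := isNorm_pos hN' hx
  rw [div_le_iff₀ hN'x]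
  refine maxA_le fun i => ?_
  have h1 : N ((A i).mulVec x) ≤ q * N x :=
    (N_mulVec_le_maxA x i).trans (maxA_le_rhoSup_mul hm hN x)
  have h2 : β * maxA A N ((A i).mulVec x) ≤ q * (β * maxA A N x) := by
    calc β * maxA A N ((A i).mulVec x) ≤ β * (q * N ((A i).mulVec x)) :=
          mul_le_mul_of_nonneg_left (maxA_le_rhoSup_mul hm hN _) hβ
      _ ≤ β * (q * maxA A N x) := by
          refine mul_le_mul_of_nonneg_left (mul_le_mul_of_nonneg_left ?_ hq0) hβ
          exact N_mulVec_le_maxA x i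
      _ = q * (β * maxA A N x) := by ring
  calc N' ((A i).mulVec x) = max (N ((A i).mulVec x)) (β * maxA A N ((A i).mulVec x)) := rfl
    _ ≤ max (q * N x) (q * (β * maxA A N x)) := max_le_max h1 h2
    _ = q * N' x := (mul_max_of_nonneg _ _ hq0).symm


-- product bounds
lemma prod_mulVec_le (hm : 1 ≤ m) (hN : IsNorm N) :
    ∀ (n : ℕ) (w : Fin n → Fin r) (x : Fin m → ℝ),
      N ((List.ofFn fun k => A (w k)).prod.mulVec x) ≤ (rhoSup A N) ^ n * N x := by
  intro n
  induction n with
  | zero => intro w x; simp [Matrix.one_mulVec]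
  | succ n ih =>
    intro w x
    rw [List.ofFn_succ, List.prod_cons, ← Matrix.mulVec_mulVec]
    calc N ((A (w 0)).mulVec ((List.ofFn fun k => A (w k.succ)).prod.mulVec x))
        ≤ maxA A N ((List.ofFn fun k => A (w k.succ)).prod.mulVec x) := N_mulVec_le_maxA _ _
      _ ≤ rhoSup A N * N ((List.ofFn fun k => A (w k.succ)).prod.mulVec x) :=
          maxA_le_rhoSup_mul hm hN _
      _ ≤ rhoSup A N * ((rhoSup A N) ^ n * N x) :=
          mul_le_mul_of_nonneg_left (ih _ x) (rhoSup_nonneg hm hN)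
      _ = (rhoSup A N) ^ (n + 1) * N x := by ring

lemma exists_prod_lb (hm : 1 ≤ m) (hN : IsNorm N) :
    ∀ (n : ℕ) (x : Fin m → ℝ), ∃ w : Fin n → Fin r,
      (rhoInf A N) ^ n * N x ≤ N ((List.ofFn fun k => A (w k)).prod.mulVec x) := by
  intro n
  induction n with
  | zero =>
    intro x
    exact ⟨fun k => k.elim0, by simp [Matrix.one_mulVec]⟩
  | succ n ih =>
    intro x
    obtain ⟨i, hi⟩ := maxA_exists (N := N) (A := A) x
    obtain ⟨w', hw'⟩ := ih ((A i).mulVec x)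
    refine ⟨Fin.snoc w' i, ?_⟩
    rw [List.ofFn_succ']
    simp only [Fin.snoc_castSucc, Fin.snoc_last]
    rw [List.prod_concat, ← Matrix.mulVec_mulVec]
    have h1 : rhoInf A N * N x ≤ N ((A i).mulVec x) := by
      rw [← hi]; exact rhoInf_mul_le hm hN x
    calc (rhoInf A N) ^ (n + 1) * N x = (rhoInf A N) ^ n * (rhoInf A N * N x) := by ring
      _ ≤ (rhoInf A N) ^ n * N ((A i).mulVec x) :=
          mul_le_mul_of_nonneg_left h1 (pow_nonneg (rhoInf_nonneg hm hN) n)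
      _ ≤ N ((List.ofFn fun k : Fin n => A (w' k)).prod.mulVec ((A i).mulVec x)) := hw'

-- tendsto of a^(1/n)
lemma tendsto_rpow_one_div {D : ℝ} (hD : 0 < D) :
    Tendsto (fun n : ℕ => D ^ (1 / (n : ℝ))) atTop (𝓝 1) := by
  have h1 : Tendsto (fun n : ℕ => Real.log D * (1 / (n : ℝ))) atTop (𝓝 0) := by
    simpa using tendsto_one_div_atTop_nhds_zero_nat.const_mul (Real.log D)
  have h2 := (Real.continuous_exp.tendsto 0).comp h1
  rw [Real.exp_zero] at h2
  exact h2.congr fun n => (Real.rpow_def_of_pos hD _).symm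

lemma jsr_bounds (hm : 1 ≤ m) (hN : IsNorm N) :
    rhoInf A N ≤ jsr A ∧ jsr A ≤ rhoSup A N := by
  obtain ⟨c, hc, hcle⟩ := isNorm_lower hm hN
  obtain ⟨C, hC, hCle⟩ := isNorm_upper hN
  set p := rhoInf A N with hp
  set q := rhoSup A N with hq
  have hp0 : 0 ≤ p := rhoInf_nonneg hm hN
  have hq0 : 0 ≤ q := rhoSup_nonneg hm hN
  set D := C / c with hD
  have hD0 : 0 < D := div_pos hC hc
  -- unit vector
  haveI : Nonempty (Fin m) := ⟨⟨0, by omega⟩⟩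
  obtain ⟨x₀, hx₀mem⟩ : (Metric.sphere (0 : Fin m → ℝ) 1).Nonempty :=
    NormedSpace.sphere_nonempty.mpr zero_le_one
  have hx₀ : ‖x₀‖ = 1 := by simpa using hx₀mem
  have hx₀ne : x₀ ≠ 0 := by intro h; rw [h] at hx₀; simp at hx₀
  set K := N x₀ / C with hK
  have hK0 : 0 < K := div_pos (isNorm_pos hN hx₀ne) hC
  set S : ℕ → ℝ := fun n => ⨆ w : Fin n → Fin r, matNorm (List.ofFn fun k => A (w k)).prod
    with hS
  set f : ℕ → ℝ := fun n => S n ^ (1 / (n : ℝ)) with hf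
  have hjsr : jsr A = atTop.limsup f := rfl
  -- upper bound on S
  have hSub : ∀ n, S n ≤ D * q ^ n := by
    intro n
    refine ciSup_le fun w => ?_
    refine matNorm_le_bound _ (by positivity) fun x => ?_
    have h1 : c * ‖(List.ofFn fun k => A (w k)).prod.mulVec x‖ ≤
        N ((List.ofFn fun k => A (w k)).prod.mulVec x) := hcle _
    have h2 := prod_mulVec_le (A := A) hm hN n w x
    have h3 := hCle x
    have h4 : q ^ n * N x ≤ q ^ n * (C * ‖x‖) :=
      mul_le_mul_of_nonneg_left h3 (pow_nonneg hq0 n)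
    rw [hD]
    rw [show C / c * q ^ n * ‖x‖ = (q ^ n * (C * ‖x‖)) / c by field_simp]
    rw [le_div_iff₀ hc]
    nlinarith [norm_nonneg ((List.ofFn fun k => A (w k)).prod.mulVec x)]
  -- lower bound on S
  have hSlb : ∀ n, K * p ^ n ≤ S n := by
    intro n
    obtain ⟨w, hw⟩ := exists_prod_lb (A := A) hm hN n x₀
    have h1 : ‖(List.ofFn fun k => A (w k)).prod.mulVec x₀‖ ≤
        matNorm (List.ofFn fun k => A (w k)).prod := le_matNorm_of_unit _ hx₀
    have h2 : N ((List.ofFn fun k => A (w k)).prod.mulVec x₀) ≤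
        C * ‖(List.ofFn fun k => A (w k)).prod.mulVec x₀‖ := hCle _
    have h3 : K * p ^ n ≤ matNorm (List.ofFn fun k => A (w k)).prod := by
      rw [hK, div_mul_eq_mul_div, div_le_iff₀ hC]
      calc N x₀ * p ^ n = p ^ n * N x₀ := by ring
        _ ≤ N ((List.ofFn fun k => A (w k)).prod.mulVec x₀) := hw
        _ ≤ C * ‖(List.ofFn fun k => A (w k)).prod.mulVec x₀‖ := h2
        _ ≤ C * matNorm (List.ofFn fun k => A (w k)).prod :=
            mul_le_mul_of_nonneg_left h1 hC.le
        _ = matNorm (List.ofFn fun k => A (w k)).prod * C := by ring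
    refine h3.trans ?_
    exact le_ciSup (f := fun w : Fin n → Fin r => matNorm (List.ofFn fun k => A (w k)).prod)
      (Set.Finite.bddAbove (Set.finite_range _)) w
  have hS0 : ∀ n, 0 ≤ S n := fun n =>
    (mul_nonneg hK0.le (pow_nonneg hp0 n)).trans (hSlb n)
  -- the comparison sequences
  set u : ℕ → ℝ := fun n => D ^ (1 / (n : ℝ)) * q with hu
  set v : ℕ → ℝ := fun n => K ^ (1 / (n : ℝ)) * p with hv
  have hun : Tendsto u atTop (𝓝 q) := by
    have := (tendsto_rpow_one_div hD0).mul_const q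
    simpa only [one_mul] using this
  have hvn : Tendsto v atTop (𝓝 p) := by
    have := (tendsto_rpow_one_div hK0).mul_const p
    simpa only [one_mul] using this
  have hfu : ∀ᶠ n in atTop, f n ≤ u n := by
    filter_upwards [eventually_ge_atTop 1] with n hn
    have hn0 : (n : ℝ) ≠ 0 := Nat.cast_ne_zero.mpr (by omega)
    have h1 : f n ≤ (D * q ^ n) ^ (1 / (n : ℝ)) :=
      Real.rpow_le_rpow (hS0 n) (hSub n) (by positivity)
    refine h1.trans_eq ?_
    rw [Real.mul_rpow hD0.le (pow_nonneg hq0 n), ← Real.rpow_natCast q n,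
      ← Real.rpow_mul hq0, mul_one_div, div_self hn0, Real.rpow_one]
  have hvf : ∀ᶠ n in atTop, v n ≤ f n := by
    filter_upwards [eventually_ge_atTop 1] with n hn
    have hn0 : (n : ℝ) ≠ 0 := Nat.cast_ne_zero.mpr (by omega)
    have h1 : (K * p ^ n) ^ (1 / (n : ℝ)) ≤ f n :=
      Real.rpow_le_rpow (by positivity) (hSlb n) (by positivity)
    refine le_trans ?_ h1
    rw [Real.mul_rpow hK0.le (pow_nonneg hp0 n), ← Real.rpow_natCast p n,
      ← Real.rpow_mul hp0, mul_one_div, div_self hn0, Real.rpow_one]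
  have hf0 : ∀ᶠ n in atTop, (0:ℝ) ≤ f n :=
    Eventually.of_forall fun n => Real.rpow_nonneg (hS0 n) _
  have hub : IsBoundedUnder (· ≤ ·) atTop f :=
    (hun.isBoundedUnder_le).mono_le hfu
  have hcob : IsCoboundedUnder (· ≤ ·) atTop f :=
    isCoboundedUnder_le_of_eventually_le atTop hf0
  constructor
  · -- p ≤ jsr
    rw [hjsr, ← hvn.limsup_eq]
    exact limsup_le_limsup hvf (hvn.isCoboundedUnder_le) hub
  · -- jsr ≤ q
    rw [hjsr, ← hun.limsup_eq]
    exact limsup_le_limsup hfu hcob (hun.isBoundedUnder_le)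

lemma step_all (hm : 1 ≤ m) (hN : IsNorm N) (β : ℝ) :
    IsNorm (fun x => max (N x) (β * maxA A N x)) ∧
    rhoInf A N ≤ rhoInf A (fun x => max (N x) (β * maxA A N x)) ∧
    rhoSup A (fun x => max (N x) (β * maxA A N x)) ≤ rhoSup A N := by
  rcases le_or_gt 0 β with hβ | hβ
  · exact ⟨step_isNorm hN hβ, step_rhoInf hm hN hβ, step_rhoSup hm hN hβ⟩
  · have heq : (fun x => max (N x) (β * maxA A N x)) = N := by
      funext x
      exact max_eq_left ((mul_nonpos_iff.mpr (Or.inr ⟨hβ.le, maxA_nonneg hN.1 x⟩)).trans (hN.1 x))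
    rw [heq]
    exact ⟨hN, le_refl _, le_refl _⟩

end Stmt0Aux

/-- in the max-relaxation iteration, `{ρ⁻_n}` is nondecreasing,
`{ρ⁺_n}` is nonincreasing, and `ρ⁻_n ≤ ρ(𝒜) ≤ ρ⁺_n` for every `n`. -/
theorem stmt0 {m r : ℕ} (hm : 2 ≤ m) (hr : 1 ≤ r)
    (A : Fin r → Matrix (Fin m) (Fin m) ℝ) (hA : IsIrreducibleFamily A)
    (γ : ℝ → ℝ → ℝ) (hγ : IsAveraging γ)
    (N0 : (Fin m → ℝ) → ℝ) (hN0 : IsNorm N0)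
    (e : Fin m → ℝ) (he : N0 e = 1) :
    (Monotone fun n => rhoInf A (iterN A γ N0 n)) ∧
      (Antitone fun n => rhoSup A (iterN A γ N0 n)) ∧
      ∀ n : ℕ, rhoInf A (iterN A γ N0 n) ≤ jsr A ∧ jsr A ≤ rhoSup A (iterN A γ N0 n) := by
  haveI : Nonempty (Fin r) := ⟨⟨0, by omega⟩⟩
  have hm1 : 1 ≤ m := by omega
  have hNn : ∀ n, IsNorm (iterN A γ N0 n) := by
    intro n
    induction n with
    | zero => exact hN0
    | succ n ih => exact (Stmt0Aux.step_all hm1 ih _).1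
  refine ⟨monotone_nat_of_le_succ fun n => ?_, antitone_nat_of_succ_le fun n => ?_, fun n => ?_⟩
  · exact (Stmt0Aux.step_all hm1 (hNn n) _).2.1
  · exact (Stmt0Aux.step_all hm1 (hNn n) _).2.2
  · exact Stmt0Aux.jsr_bounds hm1 (hNn n)
end

section
/- Let ‖·‖* be a Barabanov norm for the irreducible matrix set 𝒜, and let ‖·‖_n, ‖·‖°_n be the norms produced by the max-relaxation iteration. Then ecc(‖·‖°_n, ‖·‖*) = ecc(‖·‖_n, ‖·‖*) for every n, and the sequence of numbers ecc(‖·‖_n, ‖·‖*) is nonincreasing in n. -/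
open Matrix Filter Topology Bornology Pointwise

lemma isNorm_zero {m : ℕ} {N : (Fin m → ℝ) → ℝ} (hN : IsNorm N) : N 0 = 0 := by
  have := hN.2.2.1 0 0
  simpa using this

lemma isNorm_upper {m : ℕ} {N : (Fin m → ℝ) → ℝ} (hN : IsNorm N) :
    ∃ C : ℝ, 0 < C ∧ ∀ x, N x ≤ C * ‖x‖ := by
  classical
  have hsum : ∀ (s : Finset (Fin m)) (f : Fin m → (Fin m → ℝ)),
      N (∑ i ∈ s, f i) ≤ ∑ i ∈ s, N (f i) := by
    intro s
    induction s using Finset.cons_induction with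
    | empty => intro f; simp [isNorm_zero hN]
    | cons i s hi ih =>
        intro f
        rw [Finset.sum_cons, Finset.sum_cons]
        exact le_trans (hN.2.2.2 _ _) (add_le_add le_rfl (ih f))
  have hsnn : 0 ≤ ∑ i : Fin m, N (Pi.single i 1) :=
    Finset.sum_nonneg fun i _ => hN.1 _
  refine ⟨(∑ i : Fin m, N (Pi.single i 1)) + 1, by linarith, fun x => ?_⟩
  have hx : x = ∑ i : Fin m, (x i) • (Pi.single i 1 : Fin m → ℝ) := by
    conv_lhs => rw [← Finset.univ_sum_single x]
    refine Finset.sum_congr rfl fun i _ => ?_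
    rw [← Pi.single_smul, smul_eq_mul, mul_one]
  calc N x = N (∑ i : Fin m, (x i) • (Pi.single i 1 : Fin m → ℝ)) := by rw [← hx]
    _ ≤ ∑ i : Fin m, N ((x i) • (Pi.single i 1 : Fin m → ℝ)) := hsum _ _
    _ = ∑ i : Fin m, |x i| * N (Pi.single i 1) := by
        refine Finset.sum_congr rfl fun i _ => hN.2.2.1 _ _
    _ ≤ ∑ i : Fin m, ‖x‖ * N (Pi.single i 1) := by
        refine Finset.sum_le_sum fun i _ => mul_le_mul_of_nonneg_right ?_ (hN.1 _)
        simpa [Real.norm_eq_abs] using norm_le_pi_norm x i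
    _ = (∑ i : Fin m, N (Pi.single i 1)) * ‖x‖ := by rw [← Finset.mul_sum, mul_comm]
    _ ≤ ((∑ i : Fin m, N (Pi.single i 1)) + 1) * ‖x‖ := by
        have := norm_nonneg x; nlinarith

lemma isNorm_lower {m : ℕ} (hm : 1 ≤ m) {N : (Fin m → ℝ) → ℝ} (hN : IsNorm N) :
    ∃ c : ℝ, 0 < c ∧ ∀ x, c * ‖x‖ ≤ N x := by
  obtain ⟨C, hC, hCle⟩ := isNorm_upper hN
  have hlip : ∀ x y : Fin m → ℝ, |N x - N y| ≤ C * ‖x - y‖ := by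
    intro x y
    have h1 : N x ≤ N (x - y) + N y := by
      have := hN.2.2.2 (x - y) y; simpa using this
    have h3 : N (y - x) = N (x - y) := by
      have h := hN.2.2.1 (-1) (x - y)
      simp only [neg_smul, one_smul, neg_sub, abs_neg, abs_one, one_mul] at h
      exact h
    have h2 : N y ≤ N (x - y) + N x := by
      have := hN.2.2.2 (y - x) x
      rw [h3] at this; simpa using this
    have h4 := hCle (x - y)
    rw [abs_sub_le_iff]
    constructor <;> linarith
  have hcont : Continuous N := by
    have : LipschitzWith (Real.toNNReal C) N := by
      apply LipschitzWith.of_dist_le_mul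
      intro x y
      rw [Real.dist_eq, dist_eq_norm]
      calc |N x - N y| ≤ C * ‖x - y‖ := hlip x y
        _ = (Real.toNNReal C : ℝ) * ‖x - y‖ := by rw [Real.coe_toNNReal C hC.le]
    exact this.continuous
  haveI : Nonempty (Fin m) := ⟨⟨0, hm⟩⟩
  have hne : (Metric.sphere (0 : Fin m → ℝ) 1).Nonempty :=
    NormedSpace.sphere_nonempty.mpr zero_le_one
  obtain ⟨x₀, hx₀s, hx₀min⟩ :=
    (isCompact_sphere (0 : Fin m → ℝ) 1).exists_isMinOn hne hcont.continuousOn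
  have hx₀n : ‖x₀‖ = 1 := mem_sphere_zero_iff_norm.mp hx₀s
  have hx₀ne : x₀ ≠ 0 := by intro h; rw [h] at hx₀n; simp at hx₀n
  have hc : 0 < N x₀ :=
    lt_of_le_of_ne (hN.1 _) (fun h => hx₀ne (hN.2.1 _ h.symm))
  refine ⟨N x₀, hc, fun x => ?_⟩
  rcases eq_or_ne x 0 with rfl | hx
  · simp [isNorm_zero hN]
  · have hxn : 0 < ‖x‖ := norm_pos_iff.mpr hx
    have hun : (‖x‖⁻¹ • x) ∈ Metric.sphere (0 : Fin m → ℝ) 1 := by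
      rw [mem_sphere_zero_iff_norm, norm_smul]
      simp [abs_of_pos (inv_pos.mpr hxn), inv_mul_cancel₀ hxn.ne']
    have hmin : N x₀ ≤ N (‖x‖⁻¹ • x) := isMinOn_iff.mp hx₀min _ hun
    have hNx : N x = ‖x‖ * N (‖x‖⁻¹ • x) := by
      have h := hN.2.2.1 ‖x‖ (‖x‖⁻¹ • x)
      rw [smul_smul, mul_inv_cancel₀ hxn.ne', one_smul] at h
      rw [h, abs_of_pos hxn]
    rw [hNx, mul_comm]
    exact mul_le_mul_of_nonneg_left hmin hxn.le

lemma jsr_pos' {m r : ℕ} (hm : 2 ≤ m) (hr : 1 ≤ r)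
    (A : Fin r → Matrix (Fin m) (Fin m) ℝ) (hA : IsIrreducibleFamily A)
    (Nstar : (Fin m → ℝ) → ℝ) (hNs : IsNorm Nstar)
    (hbar : ∀ x, jsr A * Nstar x = maxA A Nstar x) : 0 < jsr A := by
  by_contra h
  push_neg at h
  haveI : Nonempty (Fin r) := ⟨⟨0, hr⟩⟩
  have hzero : ∀ (i : Fin r) (x : Fin m → ℝ), (A i).mulVec x = 0 := by
    intro i x
    have h1 : maxA A Nstar x ≤ 0 := by
      rw [← hbar]
      exact mul_nonpos_of_nonpos_of_nonneg h (hNs.1 x)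
    have h2 : Nstar ((A i).mulVec x) ≤ maxA A Nstar x := by
      show Nstar ((A i).mulVec x) ≤ ⨆ j, Nstar ((A j).mulVec x)
      exact le_ciSup (f := fun j => Nstar ((A j).mulVec x)) (Set.Finite.bddAbove (Set.finite_range _)) i
    exact hNs.2.1 _ (le_antisymm (h2.trans h1) (hNs.1 _))
  set v : Fin m → ℝ := Pi.single ⟨0, by omega⟩ 1 with hv
  have hvne : v ≠ 0 := by
    intro h'
    have h1 : v ⟨0, by omega⟩ = 1 := Pi.single_eq_same _ _
    rw [h'] at h1; simp at h1
  rcases hA (Submodule.span ℝ {v})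
      (fun i x _ => by rw [hzero i x]; exact Submodule.zero_mem _) with h' | h'
  · apply hvne
    have h2 := Submodule.mem_span_singleton_self (R := ℝ) v
    rw [h'] at h2
    simpa using h2
  · have h1 : Module.finrank ℝ (Submodule.span ℝ ({v} : Set (Fin m → ℝ))) = 1 :=
      finrank_span_singleton hvne
    rw [h'] at h1
    rw [finrank_top, Module.finrank_pi] at h1
    simp at h1
    omega

/-- `ecc(‖·‖°_n, ‖·‖*) = ecc(‖·‖_n, ‖·‖*)` for every `n`, and the sequence
`ecc(‖·‖_n, ‖·‖*)` is nonincreasing, for any Barabanov norm `‖·‖*` of `𝒜`. -/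
theorem stmt4 {m r : ℕ} (hm : 2 ≤ m) (hr : 1 ≤ r)
    (A : Fin r → Matrix (Fin m) (Fin m) ℝ) (hA : IsIrreducibleFamily A)
    (γ : ℝ → ℝ → ℝ) (hγ : IsAveraging γ)
    (N0 : (Fin m → ℝ) → ℝ) (hN0 : IsNorm N0)
    (e : Fin m → ℝ) (he : N0 e = 1)
    (Nstar : (Fin m → ℝ) → ℝ) (hNs : IsNorm Nstar)
    (hbar : ∀ x, jsr A * Nstar x = maxA A Nstar x) :
    (∀ n : ℕ, ecc (iterNnorm A γ N0 e n) Nstar = ecc (iterN A γ N0 n) Nstar) ∧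
      Antitone fun n => ecc (iterN A γ N0 n) Nstar := by
  classical
  haveI : Nonempty (Fin r) := ⟨⟨0, hr⟩⟩
  have hρ : 0 < jsr A := jsr_pos' hm hr A hA Nstar hNs hbar
  have hNs0 : Nstar 0 = 0 := isNorm_zero hNs
  have hNspos : ∀ x : Fin m → ℝ, x ≠ 0 → 0 < Nstar x := fun x hx =>
    lt_of_le_of_ne (hNs.1 x) (fun h => hx (hNs.2.1 x h.symm))
  obtain ⟨Cs, hCs, hCsle⟩ := isNorm_upper hNs
  obtain ⟨cs, hcs, hcsle⟩ := isNorm_lower (by omega) hNs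
  obtain ⟨C0, hC0, hC0le⟩ := isNorm_upper hN0
  obtain ⟨c0, hc0, hc0le⟩ := isNorm_lower (by omega) hN0
  obtain ⟨v, hv⟩ : ∃ v : Fin m → ℝ, v ≠ 0 := by
    refine ⟨Pi.single ⟨0, by omega⟩ 1, fun h => ?_⟩
    have h1 : (Pi.single (⟨0, by omega⟩ : Fin m) 1 : Fin m → ℝ) ⟨0, by omega⟩ = 1 := by simp
    rw [h] at h1; simp at h1
  -- The key step lemma
  have step : ∀ (n : ℕ) (a b : ℝ), 0 < a →
      (∀ x, a * Nstar x ≤ iterN A γ N0 n x ∧ iterN A γ N0 n x ≤ b * Nstar x) →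
      (∃ a' b', 0 < a' ∧ ∀ x, a' * Nstar x ≤ iterN A γ N0 (n+1) x ∧
         iterN A γ N0 (n+1) x ≤ b' * Nstar x) ∧
      ecc (iterN A γ N0 (n+1)) Nstar ≤ ecc (iterN A γ N0 n) Nstar := by
    intro n a b ha hab
    set Nn := iterN A γ N0 n with hNndef
    have hNn0 : Nn 0 = 0 := by
      have h1 := (hab 0).1; have h2 := (hab 0).2
      rw [hNs0] at h1 h2
      simp only [mul_zero] at h1 h2
      linarith
    have hNnpos : ∀ x, x ≠ 0 → 0 < Nn x := fun x hx =>
      lt_of_lt_of_le (mul_pos ha (hNspos x hx)) (hab x).1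
    have hSlb : ∀ y ∈ (fun x => Nn x / Nstar x) '' {x | x ≠ 0}, a ≤ y := by
      rintro y ⟨x, hx, rfl⟩
      rw [le_div_iff₀ (hNspos x hx)]
      exact (hab x).1
    have hSub : ∀ y ∈ (fun x => Nn x / Nstar x) '' {x | x ≠ 0}, y ≤ b := by
      rintro y ⟨x, hx, rfl⟩
      rw [div_le_iff₀ (hNspos x hx)]
      exact (hab x).2
    have hSne : ((fun x => Nn x / Nstar x) '' {x | x ≠ 0}).Nonempty := ⟨_, ⟨v, hv, rfl⟩⟩
    have hbddB : BddBelow ((fun x => Nn x / Nstar x) '' {x | x ≠ 0}) := ⟨a, hSlb⟩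
    have hbddA : BddAbove ((fun x => Nn x / Nstar x) '' {x | x ≠ 0}) := ⟨b, hSub⟩
    have heMdef : eMinus Nn Nstar = sInf ((fun x => Nn x / Nstar x) '' {x | x ≠ 0}) := rfl
    have hePdef : ePlus Nn Nstar = sSup ((fun x => Nn x / Nstar x) '' {x | x ≠ 0}) := rfl
    set eM := eMinus Nn Nstar with heM
    set eP := ePlus Nn Nstar with heP
    have haM : a ≤ eM := by rw [heMdef]; exact le_csInf hSne hSlb
    have hMpos : 0 < eM := lt_of_lt_of_le ha haM
    have hMP : eM ≤ eP := by
      rw [heMdef, hePdef]; exact csInf_le_csSup hSne hbddB hbddA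
    have hPpos : 0 < eP := lt_of_lt_of_le hMpos hMP
    have hpt : ∀ x, eM * Nstar x ≤ Nn x ∧ Nn x ≤ eP * Nstar x := by
      intro x
      rcases eq_or_ne x 0 with rfl | hx
      · simp [hNn0, hNs0]
      · have h1 : eM ≤ Nn x / Nstar x := by
          rw [heMdef]; exact csInf_le hbddB ⟨x, hx, rfl⟩
        have h2 : Nn x / Nstar x ≤ eP := by
          rw [hePdef]; exact le_csSup hbddA ⟨x, hx, rfl⟩
        have hxs := hNspos x hx
        rw [le_div_iff₀ hxs] at h1
        rw [div_le_iff₀ hxs] at h2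
        exact ⟨h1, h2⟩
    have hmaxub : ∀ x, maxA A Nn x ≤ eP * (jsr A * Nstar x) := by
      intro x
      have h1 : maxA A Nn x ≤ eP * maxA A Nstar x := by
        show (⨆ i, Nn ((A i).mulVec x)) ≤ eP * maxA A Nstar x
        apply ciSup_le
        intro i
        calc Nn ((A i).mulVec x) ≤ eP * Nstar ((A i).mulVec x) := (hpt _).2
          _ ≤ eP * maxA A Nstar x := by
              apply mul_le_mul_of_nonneg_left _ hPpos.le
              show Nstar ((A i).mulVec x) ≤ ⨆ j, Nstar ((A j).mulVec x)
              exact le_ciSup (f := fun j => Nstar ((A j).mulVec x))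
                (Set.Finite.bddAbove (Set.finite_range _)) i
      rw [← hbar x] at h1
      exact h1
    have hmaxlb : ∀ x, eM * (jsr A * Nstar x) ≤ maxA A Nn x := by
      intro x
      obtain ⟨i₀, hi₀⟩ := Finite.exists_max (fun i => Nstar ((A i).mulVec x))
      have hsup : maxA A Nstar x ≤ Nstar ((A i₀).mulVec x) := by
        show (⨆ j, Nstar ((A j).mulVec x)) ≤ Nstar ((A i₀).mulVec x)
        exact ciSup_le hi₀
      calc eM * (jsr A * Nstar x) = eM * maxA A Nstar x := by rw [hbar x]
        _ ≤ eM * Nstar ((A i₀).mulVec x) := mul_le_mul_of_nonneg_left hsup hMpos.le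
        _ ≤ Nn ((A i₀).mulVec x) := (hpt _).1
        _ ≤ maxA A Nn x := by
            show Nn ((A i₀).mulVec x) ≤ ⨆ j, Nn ((A j).mulVec x)
            exact le_ciSup (f := fun j => Nn ((A j).mulVec x))
              (Set.Finite.bddAbove (Set.finite_range _)) i₀
    -- bounds on rhoInf/rhoSup
    have hTlb : ∀ y ∈ (fun x => maxA A Nn x / Nn x) '' {x | x ≠ 0},
        eM * jsr A / eP ≤ y := by
      rintro y ⟨x, hx, rfl⟩
      rw [div_le_div_iff₀ hPpos (hNnpos x hx)]
      calc eM * jsr A * Nn x ≤ eM * jsr A * (eP * Nstar x) := by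
            apply mul_le_mul_of_nonneg_left (hpt x).2 (by positivity)
        _ = (eM * (jsr A * Nstar x)) * eP := by ring
        _ ≤ maxA A Nn x * eP := mul_le_mul_of_nonneg_right (hmaxlb x) hPpos.le
    have hTub : ∀ y ∈ (fun x => maxA A Nn x / Nn x) '' {x | x ≠ 0},
        y ≤ eP * jsr A / eM := by
      rintro y ⟨x, hx, rfl⟩
      rw [div_le_div_iff₀ (hNnpos x hx) hMpos]
      calc maxA A Nn x * eM ≤ (eP * (jsr A * Nstar x)) * eM :=
            mul_le_mul_of_nonneg_right (hmaxub x) hMpos.le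
        _ = (eP * jsr A) * (eM * Nstar x) := by ring
        _ ≤ (eP * jsr A) * Nn x := by
            apply mul_le_mul_of_nonneg_left (hpt x).1 (by positivity)
        _ = eP * jsr A * Nn x := by ring
    have hTne : ((fun x => maxA A Nn x / Nn x) '' {x | x ≠ 0}).Nonempty :=
      ⟨_, ⟨v, hv, rfl⟩⟩
    have hrIdef : rhoInf A Nn = sInf ((fun x => maxA A Nn x / Nn x) '' {x | x ≠ 0}) := rfl
    have hrSdef : rhoSup A Nn = sSup ((fun x => maxA A Nn x / Nn x) '' {x | x ≠ 0}) := rfl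
    have hrm : eM * jsr A / eP ≤ rhoInf A Nn := by
      rw [hrIdef]; exact le_csInf hTne hTlb
    have hrmpos : 0 < rhoInf A Nn := lt_of_lt_of_le (by positivity) hrm
    have hrMle : rhoInf A Nn ≤ rhoSup A Nn := by
      rw [hrIdef, hrSdef]
      exact csInf_le_csSup hTne ⟨_, hTlb⟩ ⟨_, hTub⟩
    have hrppos : 0 < rhoSup A Nn := lt_of_lt_of_le hrmpos hrMle
    have hγpos : 0 < γ (rhoInf A Nn) (rhoSup A Nn) := by
      rcases eq_or_lt_of_le hrMle with heq | hlt
      · rw [← heq, hγ.2.1 _ hrmpos]; exact hrmpos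
      · have h1 := (hγ.2.2 _ _ hrmpos hrppos (ne_of_lt hlt)).1
        have h2 : 0 < min (rhoInf A Nn) (rhoSup A Nn) := lt_min hrmpos hrppos
        linarith
    set g := (γ (rhoInf A Nn) (rhoSup A Nn))⁻¹ with hg
    have hgpos : 0 < g := inv_pos.mpr hγpos
    set M := max 1 (g * jsr A) with hMdef
    have hM1 : (1:ℝ) ≤ M := le_max_left _ _
    have hMpos' : (0:ℝ) < M := lt_of_lt_of_le one_pos hM1
    have hiter : ∀ x, iterN A γ N0 (n+1) x = max (Nn x) (g * maxA A Nn x) :=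
      fun x => rfl
    have hpt' : ∀ x, (eM * M) * Nstar x ≤ iterN A γ N0 (n+1) x ∧
        iterN A γ N0 (n+1) x ≤ (eP * M) * Nstar x := by
      intro x
      rw [hiter x]
      have hNsx : 0 ≤ Nstar x := hNs.1 x
      have hA1 : eM * 1 * Nstar x ≤ Nn x := by
        rw [mul_one]; exact (hpt x).1
      have hA2 : eM * (g * jsr A) * Nstar x ≤ g * maxA A Nn x := by
        calc eM * (g * jsr A) * Nstar x = g * (eM * (jsr A * Nstar x)) := by ring
          _ ≤ g * maxA A Nn x := mul_le_mul_of_nonneg_left (hmaxlb x) hgpos.le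
      constructor
      · rcases le_total (g * jsr A) 1 with hc | hc
        · rw [hMdef, max_eq_left hc]
          exact le_max_of_le_left hA1
        · rw [hMdef, max_eq_right hc]
          exact le_max_of_le_right hA2
      · apply max_le
        · calc Nn x ≤ eP * Nstar x := (hpt x).2
            _ = eP * 1 * Nstar x := by ring
            _ ≤ eP * M * Nstar x := by
                apply mul_le_mul_of_nonneg_right _ hNsx
                exact mul_le_mul_of_nonneg_left hM1 hPpos.le
        · calc g * maxA A Nn x ≤ g * (eP * (jsr A * Nstar x)) :=
              mul_le_mul_of_nonneg_left (hmaxub x) hgpos.le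
            _ = eP * (g * jsr A) * Nstar x := by ring
            _ ≤ eP * M * Nstar x := by
                apply mul_le_mul_of_nonneg_right _ hNsx
                exact mul_le_mul_of_nonneg_left (le_max_right _ _) hPpos.le
    refine ⟨⟨eM * M, eP * M, by positivity, hpt'⟩, ?_⟩
    -- eccentricity inequality
    have hSne' : ((fun x => iterN A γ N0 (n+1) x / Nstar x) '' {x | x ≠ 0}).Nonempty :=
      ⟨_, ⟨v, hv, rfl⟩⟩
    have heP' : ePlus (iterN A γ N0 (n+1)) Nstar ≤ eP * M := by
      show sSup ((fun x => iterN A γ N0 (n+1) x / Nstar x) '' {x | x ≠ 0}) ≤ eP * M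
      apply csSup_le hSne'
      rintro y ⟨x, hx, rfl⟩
      rw [div_le_iff₀ (hNspos x hx)]
      exact (hpt' x).2
    have heM' : eM * M ≤ eMinus (iterN A γ N0 (n+1)) Nstar := by
      show eM * M ≤ sInf ((fun x => iterN A γ N0 (n+1) x / Nstar x) '' {x | x ≠ 0})
      apply le_csInf hSne'
      rintro y ⟨x, hx, rfl⟩
      rw [le_div_iff₀ (hNspos x hx)]
      exact (hpt' x).1
    show ePlus (iterN A γ N0 (n+1)) Nstar / eMinus (iterN A γ N0 (n+1)) Nstar ≤
      ePlus Nn Nstar / eMinus Nn Nstar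
    rw [← heP, ← heM]
    calc ePlus (iterN A γ N0 (n+1)) Nstar / eMinus (iterN A γ N0 (n+1)) Nstar
        ≤ (eP * M) / (eM * M) := by
          apply div_le_div₀ (by positivity) heP' (by positivity) heM'
      _ = eP / eM := mul_div_mul_right _ _ (ne_of_gt hMpos')
  -- the uniform comparison bounds for every n
  have key : ∀ n : ℕ, ∃ a b : ℝ, 0 < a ∧
      ∀ x, a * Nstar x ≤ iterN A γ N0 n x ∧ iterN A γ N0 n x ≤ b * Nstar x := by
    intro n
    induction n with
    | zero =>
        refine ⟨c0 / Cs, C0 / cs, div_pos hc0 hCs, fun x => ?_⟩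
        show c0 / Cs * Nstar x ≤ N0 x ∧ N0 x ≤ C0 / cs * Nstar x
        constructor
        · calc c0 / Cs * Nstar x
              ≤ c0 / Cs * (Cs * ‖x‖) :=
                mul_le_mul_of_nonneg_left (hCsle x) (by positivity)
            _ = c0 * ‖x‖ := by field_simp
            _ ≤ N0 x := hc0le x
        · calc N0 x ≤ C0 * ‖x‖ := hC0le x
            _ = C0 / cs * (cs * ‖x‖) := by field_simp
            _ ≤ C0 / cs * Nstar x :=
                mul_le_mul_of_nonneg_left (hcsle x) (by positivity)
    | succ n ih =>
        obtain ⟨a, b, ha, hab⟩ := ih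
        exact (step n a b ha hab).1
  have part2 : Antitone fun n => ecc (iterN A γ N0 n) Nstar := by
    apply antitone_nat_of_succ_le
    intro n
    obtain ⟨a, b, ha, hab⟩ := key n
    exact (step n a b ha hab).2
  refine ⟨fun n => ?_, part2⟩
  -- normalization does not change eccentricity
  obtain ⟨a, b, ha, hab⟩ := key n
  have hene : e ≠ 0 := by
    intro h
    rw [h, isNorm_zero hN0] at he
    norm_num at he
  have hce : 0 < iterN A γ N0 n e :=
    lt_of_lt_of_le (mul_pos ha (hNspos e hene)) (hab e).1
  have hfun : (fun x => iterNnorm A γ N0 e n x / Nstar x) =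
      (fun y => (iterN A γ N0 n e)⁻¹ • y) ∘ (fun x => iterN A γ N0 n x / Nstar x) := by
    funext x
    show iterN A γ N0 n x / iterN A γ N0 n e / Nstar x =
      (iterN A γ N0 n e)⁻¹ • (iterN A γ N0 n x / Nstar x)
    rw [smul_eq_mul]
    ring
  have him : (fun x => iterNnorm A γ N0 e n x / Nstar x) '' {x | x ≠ 0}
      = (iterN A γ N0 n e)⁻¹ • ((fun x => iterN A γ N0 n x / Nstar x) '' {x | x ≠ 0}) := by
    rw [hfun, Set.image_comp, Set.image_smul]
  have h1 : ePlus (iterNnorm A γ N0 e n) Nstar =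
      (iterN A γ N0 n e)⁻¹ * ePlus (iterN A γ N0 n) Nstar := by
    show sSup ((fun x => iterNnorm A γ N0 e n x / Nstar x) '' {x | x ≠ 0}) =
      (iterN A γ N0 n e)⁻¹ * sSup ((fun x => iterN A γ N0 n x / Nstar x) '' {x | x ≠ 0})
    rw [him, Real.sSup_smul_of_nonneg (by positivity), smul_eq_mul]
  have h2 : eMinus (iterNnorm A γ N0 e n) Nstar =
      (iterN A γ N0 n e)⁻¹ * eMinus (iterN A γ N0 n) Nstar := by
    show sInf ((fun x => iterNnorm A γ N0 e n x / Nstar x) '' {x | x ≠ 0}) =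
      (iterN A γ N0 n e)⁻¹ * sInf ((fun x => iterN A γ N0 n x / Nstar x) '' {x | x ≠ 0})
    rw [him, Real.sInf_smul_of_nonneg (by positivity), smul_eq_mul]
  show ePlus (iterNnorm A γ N0 e n) Nstar / eMinus (iterNnorm A γ N0 e n) Nstar =
    ePlus (iterN A γ N0 n) Nstar / eMinus (iterN A γ N0 n) Nstar
  rw [h1, h2, mul_div_mul_left _ _ (inv_ne_zero hce.ne')]
end

section
/- If some subsequence ‖·‖°_{n_k} of the normalized norms produced by the max-relaxation iteration converges, uniformly on every bounded subset of ℝ^m, to a Barabanov norm ‖·‖* of 𝒜, then the whole sequence ‖·‖°_n converges, uniformly on every bounded subset of ℝ^m, to the same Barabanov norm ‖·‖*. -/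
open Matrix Filter Topology Bornology Pointwise

lemma IsNorm.toSemi {m : ℕ} {N : (Fin m → ℝ) → ℝ} (h : IsNorm N) : IsSeminorm N :=
  ⟨h.1, h.2.2.1, h.2.2.2⟩

lemma IsSeminorm.zero {m : ℕ} {N : (Fin m → ℝ) → ℝ} (h : IsSeminorm N) : N 0 = 0 := by
  have := h.2.1 0 0
  simpa using this

lemma IsSeminorm.sum_le {m : ℕ} {N : (Fin m → ℝ) → ℝ} (h : IsSeminorm N)
    {ι : Type*} (s : Finset ι) (f : ι → Fin m → ℝ) :
    N (∑ i ∈ s, f i) ≤ ∑ i ∈ s, N (f i) := by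
  classical
  induction s using Finset.induction with
  | empty => simp [h.zero]
  | insert a s hi ih =>
      rw [Finset.sum_insert hi, Finset.sum_insert hi]
      exact (h.2.2 _ _).trans (by linarith)

lemma IsSeminorm.upper {m : ℕ} {N : (Fin m → ℝ) → ℝ} (h : IsSeminorm N) :
    ∃ C : ℝ, 0 < C ∧ ∀ x, N x ≤ C * ‖x‖ := by
  classical
  have hnn : (0:ℝ) ≤ ∑ i : Fin m, N (Pi.single i 1) :=
    Finset.sum_nonneg fun i _ => h.1 _
  refine ⟨(∑ i : Fin m, N (Pi.single i 1)) + 1, by linarith, fun x => ?_⟩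
  set f : Fin m → (Fin m → ℝ) := fun i => Pi.single i 1 with hf
  have hx : x = ∑ i : Fin m, x i • f i := by
    funext j
    simp [hf, Pi.single_apply, Finset.sum_apply, mul_comm]
  calc N x = N (∑ i : Fin m, x i • f i) := by rw [← hx]
    _ ≤ ∑ i : Fin m, N (x i • f i) := h.sum_le _ _
    _ = ∑ i : Fin m, |x i| * N (f i) := by simp [h.2.1]
    _ ≤ ∑ i : Fin m, ‖x‖ * N (f i) := by
        refine Finset.sum_le_sum fun i _ => mul_le_mul_of_nonneg_right ?_ (h.1 _)
        simpa using norm_le_pi_norm x i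
    _ = (∑ i : Fin m, N (f i)) * ‖x‖ := by rw [Finset.sum_mul]; exact Finset.sum_congr rfl fun i _ => mul_comm _ _
    _ ≤ ((∑ i : Fin m, N (f i)) + 1) * ‖x‖ := by
        have := norm_nonneg x; nlinarith

lemma IsSeminorm.continuous {m : ℕ} {N : (Fin m → ℝ) → ℝ} (h : IsSeminorm N) :
    Continuous N := by
  obtain ⟨C, hC, hCle⟩ := h.upper
  have key : ∀ x y, |N x - N y| ≤ C * ‖x - y‖ := by
    intro x y
    have h1 : N x ≤ N (x - y) + N y := by
      have := h.2.2 (x - y) y; simpa using this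
    have h2 : N y ≤ N (x - y) + N x := by
      have hnn : N (y - x) = N (x - y) := by
        have : y - x = (-1 : ℝ) • (x - y) := by ring_nf; module
        rw [this, h.2.1]; norm_num
      have := h.2.2 (y - x) x; rw [hnn] at this; simpa using this
    have := hCle (x - y)
    rw [abs_sub_le_iff]; constructor <;> linarith
  have : LipschitzWith (Real.toNNReal C) N := by
    refine LipschitzWith.of_dist_le_mul fun x y => ?_
    rw [Real.dist_eq, dist_eq_norm]
    exact (key x y).trans (by rw [Real.coe_toNNReal _ hC.le])
  exact this.continuous

lemma sphere_compact_facts {m : ℕ} (hm : 1 ≤ m) :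
    ∃ x : Fin m → ℝ, ‖x‖ = 1 := by
  refine ⟨Pi.single ⟨0, hm⟩ 1, ?_⟩
  simp [Pi.norm_single]

lemma IsNorm.lower {m : ℕ} (hm : 1 ≤ m) {N : (Fin m → ℝ) → ℝ} (h : IsNorm N) :
    ∃ c : ℝ, 0 < c ∧ ∀ x, c * ‖x‖ ≤ N x := by
  obtain ⟨x₁, hx₁⟩ := sphere_compact_facts hm
  have hcomp : IsCompact (Metric.sphere (0 : Fin m → ℝ) 1) := isCompact_sphere _ _
  have hne : (Metric.sphere (0 : Fin m → ℝ) 1).Nonempty :=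
    ⟨x₁, by simpa [Metric.mem_sphere, dist_eq_norm] using hx₁⟩
  obtain ⟨x₀, hx₀mem, hx₀min'⟩ := hcomp.exists_isMinOn hne h.toSemi.continuous.continuousOn
  have hx₀min : ∀ y ∈ Metric.sphere (0 : Fin m → ℝ) 1, N x₀ ≤ N y := fun y hy => hx₀min' hy
  have hx₀norm : ‖x₀‖ = 1 := by simpa [Metric.mem_sphere, dist_eq_norm] using hx₀mem
  have hx₀ne : x₀ ≠ 0 := by intro hc; rw [hc] at hx₀norm; simp at hx₀norm
  have hc : 0 < N x₀ := by
    rcases lt_or_eq_of_le (h.1 x₀) with h' | h'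
    · exact h'
    · exact absurd (h.2.1 x₀ h'.symm) hx₀ne
  refine ⟨N x₀, hc, fun x => ?_⟩
  rcases eq_or_ne x 0 with rfl | hx
  · simp [h.toSemi.zero]
  · have hxn : (0:ℝ) < ‖x‖ := norm_pos_iff.mpr hx
    set u := ‖x‖⁻¹ • x with hu
    have hun : ‖u‖ = 1 := by
      rw [hu, norm_smul]; simp [abs_of_pos (inv_pos.mpr hxn), inv_mul_cancel₀ hxn.ne']
    have humem : u ∈ Metric.sphere (0 : Fin m → ℝ) 1 := by
      simpa [Metric.mem_sphere, dist_eq_norm] using hun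
    have := hx₀min u humem
    have hxu : x = ‖x‖ • u := by rw [hu, smul_inv_smul₀ hxn.ne']
    have hNx : N x = ‖x‖ * N u := by
      calc N x = N (‖x‖ • u) := by rw [← hxu]
        _ = |‖x‖| * N u := h.2.2.1 _ _
        _ = ‖x‖ * N u := by rw [abs_of_pos hxn]
    rw [hNx]
    nlinarith [hx₀min u humem]

section MaxA
variable {m r : ℕ} {A : Fin r → Matrix (Fin m) (Fin m) ℝ} {N : (Fin m → ℝ) → ℝ}

lemma maxA_nonneg (hN : ∀ x, 0 ≤ N x) (x : Fin m → ℝ) : 0 ≤ maxA A N x :=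
  Real.iSup_nonneg fun i => hN _

lemma le_maxA (i : Fin r) (x : Fin m → ℝ) :
    N ((A i).mulVec x) ≤ maxA A N x :=
  le_ciSup (f := fun j => N ((A j).mulVec x))
    (Set.Finite.bddAbove (Set.finite_range _)) i

lemma maxA_le (hr : 0 < r) {b : ℝ} {x : Fin m → ℝ}
    (h : ∀ i, N ((A i).mulVec x) ≤ b) : maxA A N x ≤ b := by
  haveI : Nonempty (Fin r) := ⟨⟨0, hr⟩⟩
  exact ciSup_le h

lemma isSeminorm_maxA (hr : 0 < r) (hN : IsSeminorm N) : IsSeminorm (maxA A N) := by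
  haveI : Nonempty (Fin r) := ⟨⟨0, hr⟩⟩
  refine ⟨maxA_nonneg hN.1, fun t x => ?_, fun x y => ?_⟩
  · unfold maxA
    simp_rw [Matrix.mulVec_smul, hN.2.1]
    exact (Real.mul_iSup_of_nonneg (abs_nonneg t) _).symm
  · refine maxA_le hr fun i => ?_
    rw [Matrix.mulVec_add]
    exact (hN.2.2 _ _).trans
      (add_le_add (le_maxA i x) (le_maxA i y))

lemma isNorm_maxA (hr : 0 < r) (hN : IsNorm N)
    (hker : ∀ x : Fin m → ℝ, x ≠ 0 → ∃ i, (A i).mulVec x ≠ 0) :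
    IsNorm (maxA A N) := by
  have hs := isSeminorm_maxA (A := A) hr hN.toSemi
  refine ⟨hs.1, fun x hx => ?_, hs.2.1, hs.2.2⟩
  by_contra hxne
  obtain ⟨i, hi⟩ := hker x hxne
  have h1 : N ((A i).mulVec x) ≤ 0 := hx ▸ le_maxA i x
  have h2 : 0 ≤ N ((A i).mulVec x) := hN.1 _
  exact hi (hN.2.1 _ (le_antisymm h1 h2))
end MaxA

section Ecc
variable {m : ℕ} {N N' : (Fin m → ℝ) → ℝ}

lemma IsNorm.pos (h : IsNorm N) {x : Fin m → ℝ} (hx : x ≠ 0) : 0 < N x := by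
  rcases lt_or_eq_of_le (h.1 x) with h' | h'
  · exact h'
  · exact absurd (h.2.1 x h'.symm) hx

lemma exists_ne_zero {m : ℕ} (hm : 1 ≤ m) : ∃ x : Fin m → ℝ, x ≠ 0 := by
  obtain ⟨x, hx⟩ := sphere_compact_facts hm
  exact ⟨x, fun hc => by rw [hc] at hx; simp at hx⟩

lemma ratio_bounds (hm : 1 ≤ m) (hN : IsNorm N) (hN' : IsNorm N') :
    ∃ c C : ℝ, 0 < c ∧ ∀ x : Fin m → ℝ, x ≠ 0 → c ≤ N x / N' x ∧ N x / N' x ≤ C := by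
  obtain ⟨c1, hc1, hlow⟩ := hN.lower hm
  obtain ⟨C1, hC1, hup⟩ := hN.toSemi.upper
  obtain ⟨c2, hc2, hlow'⟩ := hN'.lower hm
  obtain ⟨C2, hC2, hup'⟩ := hN'.toSemi.upper
  refine ⟨c1 / C2, C1 / c2, by positivity, fun x hx => ?_⟩
  have hxn : (0:ℝ) < ‖x‖ := norm_pos_iff.mpr hx
  have hN'x : 0 < N' x := hN'.pos hx
  constructor
  · rw [div_le_div_iff₀ hC2 hN'x]
    nlinarith [hlow x, hup' x]
  · rw [div_le_div_iff₀ hN'x hc2]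
    nlinarith [hup x, hlow' x]

lemma ratioSet_ne (hm : 1 ≤ m) :
    ((fun x => N x / N' x) '' {x | x ≠ 0}).Nonempty := by
  obtain ⟨x, hx⟩ := exists_ne_zero hm
  exact ⟨_, Set.mem_image_of_mem _ hx⟩

lemma eMinus_le_ratio (hm : 1 ≤ m) (hN : IsNorm N) (hN' : IsNorm N')
    {x : Fin m → ℝ} (hx : x ≠ 0) : eMinus N N' ≤ N x / N' x := by
  obtain ⟨c, C, hc, hb⟩ := ratio_bounds hm hN hN'
  exact csInf_le ⟨c, fun y ⟨z, hz, hzy⟩ => hzy ▸ (hb z hz).1⟩ (Set.mem_image_of_mem _ hx)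

lemma ratio_le_ePlus (hm : 1 ≤ m) (hN : IsNorm N) (hN' : IsNorm N')
    {x : Fin m → ℝ} (hx : x ≠ 0) : N x / N' x ≤ ePlus N N' := by
  obtain ⟨c, C, hc, hb⟩ := ratio_bounds hm hN hN'
  exact le_csSup ⟨C, fun y ⟨z, hz, hzy⟩ => hzy ▸ (hb z hz).2⟩ (Set.mem_image_of_mem _ hx)

lemma ePlus_le (hm : 1 ≤ m) {b : ℝ}
    (h : ∀ x : Fin m → ℝ, x ≠ 0 → N x / N' x ≤ b) : ePlus N N' ≤ b :=
  csSup_le (ratioSet_ne hm) (fun y ⟨z, hz, hzy⟩ => hzy ▸ h z hz)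

lemma le_eMinus (hm : 1 ≤ m) {b : ℝ}
    (h : ∀ x : Fin m → ℝ, x ≠ 0 → b ≤ N x / N' x) : b ≤ eMinus N N' :=
  le_csInf (ratioSet_ne hm) (fun y ⟨z, hz, hzy⟩ => hzy ▸ h z hz)

lemma eMinus_pos (hm : 1 ≤ m) (hN : IsNorm N) (hN' : IsNorm N') :
    0 < eMinus N N' := by
  obtain ⟨c, C, hc, hb⟩ := ratio_bounds hm hN hN'
  exact hc.trans_le (le_eMinus hm fun x hx => (hb x hx).1)

lemma eMinus_le_ePlus (hm : 1 ≤ m) (hN : IsNorm N) (hN' : IsNorm N') :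
    eMinus N N' ≤ ePlus N N' := by
  obtain ⟨x, hx⟩ := exists_ne_zero hm
  exact (eMinus_le_ratio hm hN hN' hx).trans (ratio_le_ePlus hm hN hN' hx)

lemma eMinus_mul_le (hm : 1 ≤ m) (hN : IsNorm N) (hN' : IsNorm N')
    (x : Fin m → ℝ) : eMinus N N' * N' x ≤ N x := by
  rcases eq_or_ne x 0 with rfl | hx
  · simp [hN.toSemi.zero, hN'.toSemi.zero]
  · have := eMinus_le_ratio hm hN hN' hx
    have hpos := hN'.pos hx
    rw [le_div_iff₀ hpos] at this
    exact this

lemma le_ePlus_mul (hm : 1 ≤ m) (hN : IsNorm N) (hN' : IsNorm N')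
    (x : Fin m → ℝ) : N x ≤ ePlus N N' * N' x := by
  rcases eq_or_ne x 0 with rfl | hx
  · simp [hN.toSemi.zero, hN'.toSemi.zero]
  · have := ratio_le_ePlus hm hN hN' hx
    have hpos := hN'.pos hx
    rw [div_le_iff₀ hpos] at this
    exact this

lemma ePlus_pos (hm : 1 ≤ m) (hN : IsNorm N) (hN' : IsNorm N') : 0 < ePlus N N' :=
  (eMinus_pos hm hN hN').trans_le (eMinus_le_ePlus hm hN hN')
end Ecc

section Iter
variable {m r : ℕ} {A : Fin r → Matrix (Fin m) (Fin m) ℝ}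
  {γ : ℝ → ℝ → ℝ} {N0 : (Fin m → ℝ) → ℝ}

lemma rhoSup_eq (N : (Fin m → ℝ) → ℝ) : rhoSup A N = ePlus (maxA A N) N := rfl
lemma rhoInf_eq (N : (Fin m → ℝ) → ℝ) : rhoInf A N = eMinus (maxA A N) N := rfl

lemma gamma_pos {γ : ℝ → ℝ → ℝ} (hγ : IsAveraging γ) {a b : ℝ}
    (ha : 0 < a) (hab : a ≤ b) : 0 < γ a b := by
  rcases eq_or_lt_of_le hab with rfl | h
  · rw [hγ.2.1 a ha]; exact ha
  · have := (hγ.2.2 a b ha (ha.trans h) h.ne).1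
    rw [min_eq_left hab] at this
    linarith

lemma hker_of_irred (hA : IsIrreducibleFamily A)
    (hnd : ∃ i x, (A i).mulVec x ≠ 0) :
    ∀ x : Fin m → ℝ, x ≠ 0 → ∃ i, (A i).mulVec x ≠ 0 := by
  intro x hx
  by_contra hc
  push_neg at hc
  set W : Submodule ℝ (Fin m → ℝ) :=
    { carrier := {y | ∀ i, (A i).mulVec y = 0}
      add_mem' := fun ha hb => by
        intro i; rw [Matrix.mulVec_add, ha i, hb i, add_zero]
      zero_mem' := fun i => Matrix.mulVec_zero _
      smul_mem' := fun c y hy => by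
        intro i; rw [Matrix.mulVec_smul, hy i, smul_zero] } with hW
  have hinv : ∀ i, ∀ y ∈ W, (A i).mulVec y ∈ W := by
    intro i y hy j
    rw [hy i, Matrix.mulVec_zero]
  rcases hA W hinv with h | h
  · have hxW : x ∈ W := hc
    rw [h] at hxW
    exact hx (Submodule.mem_bot ℝ |>.mp hxW)
  · obtain ⟨i, z, hz⟩ := hnd
    exact hz ((h ▸ Submodule.mem_top : z ∈ W) i)

lemma isNorm_iterN (hm : 1 ≤ m) (hr : 0 < r) (hγ : IsAveraging γ)
    (hN0 : IsNorm N0)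
    (hker : ∀ x : Fin m → ℝ, x ≠ 0 → ∃ i, (A i).mulVec x ≠ 0) :
    ∀ n, IsNorm (iterN A γ N0 n) := by
  intro n
  induction n with
  | zero => exact hN0
  | succ n ih =>
    set N := iterN A γ N0 n with hN
    have hNmax : IsNorm (maxA A N) := isNorm_maxA hr ih hker
    have hginv : 0 ≤ (γ (rhoInf A N) (rhoSup A N))⁻¹ := by
      refine inv_nonneg.mpr (gamma_pos hγ ?_ ?_).le
      · rw [rhoInf_eq]; exact eMinus_pos hm hNmax ih
      · rw [rhoInf_eq, rhoSup_eq]; exact eMinus_le_ePlus hm hNmax ih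
    set c := (γ (rhoInf A N) (rhoSup A N))⁻¹ with hc
    show IsNorm (fun x => max (N x) (c * maxA A N x))
    refine ⟨fun x => le_trans (ih.1 x) (le_max_left _ _), fun x hx => ?_,
      fun t x => ?_, fun x y => ?_⟩
    · have h1 : N x ≤ 0 := hx ▸ le_max_left _ _
      exact ih.2.1 x (le_antisymm h1 (ih.1 x))
    · show max (N (t • x)) (c * maxA A N (t • x)) = |t| * max (N x) (c * maxA A N x)
      rw [ih.2.2.1, hNmax.2.2.1, mul_max_of_nonneg _ _ (abs_nonneg t)]
      ring_nf
    · show max (N (x + y)) (c * maxA A N (x + y)) ≤ _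
      refine max_le ?_ ?_
      · exact (ih.2.2.2 x y).trans (add_le_add (le_max_left _ _) (le_max_left _ _))
      · calc c * maxA A N (x + y) ≤ c * (maxA A N x + maxA A N y) :=
              mul_le_mul_of_nonneg_left (hNmax.2.2.2 x y) hginv
          _ = c * maxA A N x + c * maxA A N y := mul_add _ _ _
          _ ≤ _ := add_le_add (le_max_right _ _) (le_max_right _ _)
end Iter

section Rec
variable {m r : ℕ} {A : Fin r → Matrix (Fin m) (Fin m) ℝ}
  {γ : ℝ → ℝ → ℝ} {N0 Nstar : (Fin m → ℝ) → ℝ}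

lemma jsr_nonneg (hm : 1 ≤ m) (hr : 0 < r) (hNs : IsNorm Nstar)
    (hbar : ∀ x, jsr A * Nstar x = maxA A Nstar x) : 0 ≤ jsr A := by
  obtain ⟨x, hx⟩ := exists_ne_zero (m := m) hm
  have h1 : 0 ≤ jsr A * Nstar x := (hbar x).symm ▸ maxA_nonneg hNs.1 x
  nlinarith [hNs.pos hx]

lemma ecc_step (hm : 1 ≤ m) (hr : 0 < r) (hγ : IsAveraging γ) (hN0 : IsNorm N0)
    (hker : ∀ x : Fin m → ℝ, x ≠ 0 → ∃ i, (A i).mulVec x ≠ 0)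
    (hNs : IsNorm Nstar) (hbar : ∀ x, jsr A * Nstar x = maxA A Nstar x) (n : ℕ) :
    ePlus (iterN A γ N0 (n+1)) Nstar / eMinus (iterN A γ N0 (n+1)) Nstar ≤
      ePlus (iterN A γ N0 n) Nstar / eMinus (iterN A γ N0 n) Nstar := by
  set N := iterN A γ N0 n with hNdef
  have hNn : IsNorm N := isNorm_iterN hm hr hγ hN0 hker n
  have hNp : IsNorm (iterN A γ N0 (n+1)) := isNorm_iterN hm hr hγ hN0 hker (n+1)
  have hNmax : IsNorm (maxA A N) := isNorm_maxA hr hNn hker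
  set g := γ (rhoInf A N) (rhoSup A N) with hgdef
  have hg : 0 < g := by
    refine gamma_pos hγ ?_ ?_
    · rw [rhoInf_eq]; exact eMinus_pos hm hNmax hNn
    · rw [rhoInf_eq, rhoSup_eq]; exact eMinus_le_ePlus hm hNmax hNn
  set ρ := jsr A with hρdef
  have hρ : 0 ≤ ρ := jsr_nonneg hm hr hNs hbar
  set Ep := ePlus N Nstar with hEpdef
  set Em := eMinus N Nstar with hEmdef
  have hEm : 0 < Em := eMinus_pos hm hNn hNs
  have hEp : 0 < Ep := ePlus_pos hm hNn hNs
  set M := max 1 (ρ * g⁻¹) with hMdef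
  have hM1 : (1:ℝ) ≤ M := le_max_left _ _
  have hMq : ρ * g⁻¹ ≤ M := le_max_right _ _
  have hM0 : (0:ℝ) < M := lt_of_lt_of_le one_pos hM1
  have hiter : ∀ x, iterN A γ N0 (n+1) x = max (N x) (g⁻¹ * maxA A N x) :=
    fun x => rfl
  have hupper : ∀ x, iterN A γ N0 (n+1) x ≤ Ep * M * Nstar x := by
    intro x
    rw [hiter]
    have hNsx : 0 ≤ Nstar x := hNs.1 x
    refine max_le ?_ ?_
    · have := le_ePlus_mul hm hNn hNs x
      nlinarith [mul_nonneg (mul_nonneg hEp.le hNsx) (sub_nonneg.mpr hM1)]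
    · have h1 : maxA A N x ≤ Ep * maxA A Nstar x := by
        refine maxA_le hr fun i => ?_
        calc N ((A i).mulVec x) ≤ Ep * Nstar ((A i).mulVec x) :=
              le_ePlus_mul hm hNn hNs _
          _ ≤ Ep * maxA A Nstar x :=
              mul_le_mul_of_nonneg_left (le_maxA i x) hEp.le
      have h2 : maxA A Nstar x = ρ * Nstar x := (hbar x).symm
      rw [h2] at h1
      have h3 : g⁻¹ * maxA A N x ≤ g⁻¹ * (Ep * (ρ * Nstar x)) :=
        mul_le_mul_of_nonneg_left h1 (inv_nonneg.mpr hg.le)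
      refine h3.trans ?_
      have : g⁻¹ * (Ep * (ρ * Nstar x)) = Ep * ((ρ * g⁻¹) * Nstar x) := by ring
      rw [this]
      nlinarith [mul_nonneg (mul_nonneg hEp.le hNsx) (sub_nonneg.mpr hMq)]
  have hlower : ∀ x, Em * M * Nstar x ≤ iterN A γ N0 (n+1) x := by
    intro x
    rw [hiter]
    have hNsx : 0 ≤ Nstar x := hNs.1 x
    have hb1 : Em * Nstar x ≤ N x := eMinus_mul_le hm hNn hNs x
    have h1 : Em * maxA A Nstar x ≤ maxA A N x := by
      have hle : maxA A Nstar x ≤ Em⁻¹ * maxA A N x := by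
        refine maxA_le hr fun i => ?_
        have := eMinus_mul_le hm hNn hNs ((A i).mulVec x)
        have h2 : N ((A i).mulVec x) ≤ maxA A N x := le_maxA i x
        rw [le_inv_mul_iff₀ hEm]
        linarith
      calc Em * maxA A Nstar x ≤ Em * (Em⁻¹ * maxA A N x) :=
            mul_le_mul_of_nonneg_left hle hEm.le
        _ = maxA A N x := by field_simp
    have h2 : maxA A Nstar x = ρ * Nstar x := (hbar x).symm
    rw [h2] at h1
    rcases max_cases (1:ℝ) (ρ * g⁻¹) with ⟨hMeq, hc⟩ | ⟨hMeq, hc⟩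
    · rw [← hMdef] at hMeq
      rw [hMeq, mul_one]
      exact hb1.trans (le_max_left _ _)
    · rw [← hMdef] at hMeq
      rw [hMeq]
      refine le_trans ?_ (le_max_right _ _)
      have h3 : g⁻¹ * (Em * (ρ * Nstar x)) ≤ g⁻¹ * maxA A N x :=
        mul_le_mul_of_nonneg_left h1 (inv_nonneg.mpr hg.le)
      refine le_trans (le_of_eq ?_) h3
      ring
  have hPle : ePlus (iterN A γ N0 (n+1)) Nstar ≤ Ep * M :=
    ePlus_le hm fun x hx => (div_le_iff₀ (hNs.pos hx)).mpr (hupper x)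
  have hMge : Em * M ≤ eMinus (iterN A γ N0 (n+1)) Nstar :=
    le_eMinus hm fun x hx => (le_div_iff₀ (hNs.pos hx)).mpr (hlower x)
  calc ePlus (iterN A γ N0 (n+1)) Nstar / eMinus (iterN A γ N0 (n+1)) Nstar
      ≤ (Ep * M) / (Em * M) :=
        div_le_div₀ (by positivity) hPle (by positivity) hMge
    _ = Ep / Em := mul_div_mul_right _ _ hM0.ne'
end Rec

lemma IsNorm.scale {m : ℕ} {N : (Fin m → ℝ) → ℝ} (h : IsNorm N)
    {y : Fin m → ℝ} (hy : y ≠ 0) : N y = ‖y‖ * N (‖y‖⁻¹ • y) := by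
  rw [h.2.2.1, abs_inv, abs_norm, ← mul_assoc,
    mul_inv_cancel₀ (norm_ne_zero_iff.mpr hy), one_mul]


/-- if a subsequence of the normalized norms `‖·‖°_{n_k}` converges uniformly
on bounded sets to a Barabanov norm `‖·‖*`, then the whole sequence `‖·‖°_n` converges
uniformly on bounded sets to the same Barabanov norm. -/
theorem stmt7 {m r : ℕ} (hm : 2 ≤ m) (hr : 1 ≤ r)
    (A : Fin r → Matrix (Fin m) (Fin m) ℝ) (hA : IsIrreducibleFamily A)
    (γ : ℝ → ℝ → ℝ) (hγ : IsAveraging γ)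
    (N0 : (Fin m → ℝ) → ℝ) (hN0 : IsNorm N0)
    (e : Fin m → ℝ) (he : N0 e = 1)
    (Nstar : (Fin m → ℝ) → ℝ) (hNs : IsNorm Nstar)
    (hbar : ∀ x, jsr A * Nstar x = maxA A Nstar x)
    (φ : ℕ → ℕ) (hφ : StrictMono φ)
    (hconv : ∀ S : Set (Fin m → ℝ), IsBounded S →
      TendstoUniformlyOn (fun k => iterNnorm A γ N0 e (φ k)) Nstar atTop S) :
    ∀ S : Set (Fin m → ℝ), IsBounded S →
      TendstoUniformlyOn (fun n => iterNnorm A γ N0 e n) Nstar atTop S := by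
  have hm1 : 1 ≤ m := le_trans (by norm_num) hm
  have hr0 : 0 < r := hr
  haveI : Nonempty (Fin r) := ⟨⟨0, hr0⟩⟩
  by_cases hnd : ∃ i, ∃ x : Fin m → ℝ, (A i).mulVec x ≠ 0
  swap
  · -- degenerate case : all matrices are zero
    push_neg at hnd
    have hIter : ∀ n x, iterN A γ N0 n x = N0 x := by
      intro n
      induction n with
      | zero => intro x; rfl
      | succ n ih =>
        intro x
        show max (iterN A γ N0 n x) (_ * maxA A (iterN A γ N0 n) x) = N0 x
        have hmax : maxA A (iterN A γ N0 n) x = 0 := by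
          unfold maxA
          have : ∀ i : Fin r, iterN A γ N0 n ((A i).mulVec x) = 0 := by
            intro i
            rw [hnd i x, ih 0, hN0.toSemi.zero]
          simp_rw [this]
          exact ciSup_const
        rw [hmax, mul_zero, ih x, max_eq_left (hN0.1 x)]
    have hNn : ∀ n, iterNnorm A γ N0 e n = fun x => N0 x := by
      intro n
      funext x
      unfold iterNnorm
      rw [hIter n x, hIter n e, he, div_one]
    intro S hS
    have h := hconv S hS
    simp only [hNn] at h ⊢
    exact h
  · -- nondegenerate case
    have hker := hker_of_irred hA hnd
    have hNit : ∀ n, IsNorm (iterN A γ N0 n) := isNorm_iterN hm1 hr0 hγ hN0 hker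
    have he0 : e ≠ 0 := by
      intro hc
      rw [hc, hN0.toSemi.zero] at he
      norm_num at he
    set g : ℕ → ℝ := fun n => iterN A γ N0 n e with hgdef
    have hg : ∀ n, 0 < g n := fun n => (hNit n).pos he0
    have horm : ∀ n, iterNnorm A γ N0 e n e = 1 := fun n => div_self (hg n).ne'
    -- Nstar e = 1
    have hNse : Nstar e = 1 := by
      have hsb : IsBounded ({e} : Set (Fin m → ℝ)) := Bornology.isBounded_singleton
      have h1 := (hconv {e} hsb).tendsto_at (Set.mem_singleton e)
      have h2 : Tendsto (fun _ : ℕ => (1:ℝ)) atTop (𝓝 (Nstar e)) := by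
        simpa [horm] using h1
      exact tendsto_nhds_unique h2 tendsto_const_nhds
    set Ep : ℕ → ℝ := fun n => ePlus (iterN A γ N0 n) Nstar with hEpdef
    set Em : ℕ → ℝ := fun n => eMinus (iterN A γ N0 n) Nstar with hEmdef
    have hEm : ∀ n, 0 < Em n := fun n => eMinus_pos hm1 (hNit n) hNs
    have hEpEm : ∀ n, Em n ≤ Ep n := fun n => eMinus_le_ePlus hm1 (hNit n) hNs
    have hEp : ∀ n, 0 < Ep n := fun n => lt_of_lt_of_le (hEm n) (hEpEm n)
    have hub : ∀ n x, iterN A γ N0 n x ≤ Ep n * Nstar x :=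
      fun n x => le_ePlus_mul hm1 (hNit n) hNs x
    have hlb : ∀ n x, Em n * Nstar x ≤ iterN A γ N0 n x :=
      fun n x => eMinus_mul_le hm1 (hNit n) hNs x
    have hEmg : ∀ n, Em n ≤ g n := by
      intro n
      have := hlb n e
      rw [hNse, mul_one] at this
      exact this
    have hgEp : ∀ n, g n ≤ Ep n := by
      intro n
      have := hub n e
      rw [hNse, mul_one] at this
      exact this
    -- eccentricity is antitone
    have hanti : ∀ k n, k ≤ n → Ep n / Em n ≤ Ep k / Em k := by
      intro k n hkn
      have := antitone_nat_of_succ_le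
        (f := fun n => Ep n / Em n)
        (fun n => ecc_step hm1 hr0 hγ hN0 hker hNs hbar n) hkn
      exact this
    -- lower bound constant for Nstar
    obtain ⟨cs, hcs, hNsl⟩ := hNs.lower hm1
    -- subsequence bound on eccentricity
    have hsub : ∀ d : ℝ, 0 < d → ∃ K : ℕ, Ep (φ K) ≤ (1 + d) * Em (φ K) := by
      intro d hd
      set q : ℝ := d / (2 + d) with hqdef
      have hq0 : 0 < q := by positivity
      set δ' : ℝ := cs * q with hδdef
      have hδ0 : 0 < δ' := by positivity
      have h := (Metric.tendstoUniformlyOn_iff.mp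
        (hconv (Metric.sphere 0 1) Metric.isBounded_sphere)) δ' hδ0
      obtain ⟨K, hK⟩ := h.exists
      refine ⟨K, ?_⟩
      -- unit vectors : bounds
      have hKey : ∀ u : Fin m → ℝ, ‖u‖ = 1 →
          iterN A γ N0 (φ K) u ≤ (1 + q) * g (φ K) * Nstar u ∧
          (1 - q) * g (φ K) * Nstar u ≤ iterN A γ N0 (φ K) u := by
        intro u hu
        have humem : u ∈ Metric.sphere (0 : Fin m → ℝ) 1 := by
          simpa [Metric.mem_sphere, dist_eq_norm] using hu
        have hd1 := hK u humem
        rw [Real.dist_eq, abs_sub_lt_iff] at hd1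
        have hNu : cs ≤ Nstar u := by
          have := hNsl u
          rw [hu, mul_one] at this
          exact this
        have hnn : iterNnorm A γ N0 e (φ K) u = iterN A γ N0 (φ K) u / g (φ K) := rfl
        rw [hnn] at hd1
        have hgK := hg (φ K)
        have hδN : δ' ≤ q * Nstar u := by
          rw [hδdef]
          nlinarith
        constructor
        · have h1 : iterN A γ N0 (φ K) u / g (φ K) < Nstar u + δ' := by linarith [hd1.2]
          rw [div_lt_iff₀ hgK] at h1
          nlinarith
        · have h1 : Nstar u - δ' < iterN A γ N0 (φ K) u / g (φ K) := by linarith [hd1.1]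
          rw [lt_div_iff₀ hgK] at h1
          nlinarith
      have hEpb : Ep (φ K) ≤ (1 + q) * g (φ K) := by
        refine ePlus_le hm1 fun y hy => ?_
        rw [div_le_iff₀ (hNs.pos hy)]
        have hyu : ‖(‖y‖⁻¹ • y)‖ = 1 := norm_smul_inv_norm hy
        have h1 := (hKey _ hyu).1
        have h2 := (hNit (φ K)).scale hy
        have h3 := hNs.scale hy
        rw [h2, h3]
        have hyn : (0:ℝ) ≤ ‖y‖ := norm_nonneg y
        calc ‖y‖ * iterN A γ N0 (φ K) (‖y‖⁻¹ • y)
            ≤ ‖y‖ * ((1 + q) * g (φ K) * Nstar (‖y‖⁻¹ • y)) :=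
              mul_le_mul_of_nonneg_left h1 hyn
          _ = (1 + q) * g (φ K) * (‖y‖ * Nstar (‖y‖⁻¹ • y)) := by ring
      have hEmb : (1 - q) * g (φ K) ≤ Em (φ K) := by
        refine le_eMinus hm1 fun y hy => ?_
        rw [le_div_iff₀ (hNs.pos hy)]
        have hyu : ‖(‖y‖⁻¹ • y)‖ = 1 := norm_smul_inv_norm hy
        have h1 := (hKey _ hyu).2
        have h2 := (hNit (φ K)).scale hy
        have h3 := hNs.scale hy
        rw [h2, h3]
        have hyn : (0:ℝ) ≤ ‖y‖ := norm_nonneg y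
        calc (1 - q) * g (φ K) * (‖y‖ * Nstar (‖y‖⁻¹ • y))
            = ‖y‖ * ((1 - q) * g (φ K) * Nstar (‖y‖⁻¹ • y)) := by ring
          _ ≤ ‖y‖ * iterN A γ N0 (φ K) (‖y‖⁻¹ • y) :=
              mul_le_mul_of_nonneg_left h1 hyn
      -- combine : (1+q) ≤ (1+d)(1-q)
      have hqd : (1 + q) = (1 + d) * (1 - q) := by
        rw [hqdef]
        field_simp
        ring
      calc Ep (φ K) ≤ (1 + q) * g (φ K) := hEpb
        _ = (1 + d) * ((1 - q) * g (φ K)) := by rw [hqd]; ring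
        _ ≤ (1 + d) * Em (φ K) := by
            have : (0:ℝ) ≤ 1 + d := by linarith
            exact mul_le_mul_of_nonneg_left hEmb this
    -- main convergence
    intro S hS
    rw [Metric.tendstoUniformlyOn_iff]
    intro ε hε
    obtain ⟨Ct, hCt, hNsu⟩ := hNs.toSemi.upper
    obtain ⟨R, hR⟩ := hS.subset_closedBall 0
    set B : ℝ := Ct * max R 0 + 1 with hBdef
    have hB : 0 < B := by positivity
    have hNsB : ∀ x ∈ S, Nstar x ≤ B := by
      intro x hx
      have h1 : ‖x‖ ≤ max R 0 := le_trans (mem_closedBall_zero_iff.mp (hR hx)) (le_max_left _ _)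
      calc Nstar x ≤ Ct * ‖x‖ := hNsu x
        _ ≤ Ct * max R 0 := mul_le_mul_of_nonneg_left h1 hCt.le
        _ ≤ B := by rw [hBdef]; linarith
    set d : ℝ := min 1 (ε / (B + 1)) with hddef
    have hd0 : 0 < d := lt_min one_pos (by positivity)
    have hd1 : d ≤ 1 := min_le_left _ _
    have hdε : d * B < ε := by
      have h1 : d ≤ ε / (B + 1) := min_le_right _ _
      have h2 : d * B ≤ (ε / (B + 1)) * B := mul_le_mul_of_nonneg_right h1 hB.le
      have h3 : (ε / (B + 1)) * B < ε := by
        rw [div_mul_eq_mul_div, div_lt_iff₀ (by positivity)]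
        nlinarith
      calc d * B ≤ ε / (B + 1) * B := h2
        _ < ε := h3
    obtain ⟨K, hK⟩ := hsub d hd0
    rw [eventually_atTop]
    refine ⟨φ K, fun n hn x hx => ?_⟩
    have hEcc : Ep n / Em n ≤ 1 + d := by
      have h1 := hanti (φ K) n hn
      have h2 : Ep (φ K) / Em (φ K) ≤ 1 + d := by
        rw [div_le_iff₀ (hEm (φ K))]
        exact hK
      linarith
    have hEd : Ep n ≤ (1 + d) * Em n := by
      rw [div_le_iff₀ (hEm n)] at hEcc
      exact hEcc
    have key1 : Ep n ≤ (1 + d) * g n := by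
      have := hEmg n
      nlinarith [hEm n]
    have key2 : (1 - d) * g n ≤ Em n := by
      have h1 := hgEp n
      have h2 := hEm n
      nlinarith
    have hgn := hg n
    have hNsx : 0 ≤ Nstar x := hNs.1 x
    have hup : iterNnorm A γ N0 e n x ≤ (1 + d) * Nstar x := by
      have h1 : iterN A γ N0 n x ≤ (1 + d) * g n * Nstar x := by
        calc iterN A γ N0 n x ≤ Ep n * Nstar x := hub n x
          _ ≤ (1 + d) * g n * Nstar x := mul_le_mul_of_nonneg_right key1 hNsx
      show iterN A γ N0 n x / g n ≤ (1 + d) * Nstar x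
      rw [div_le_iff₀ hgn]
      linarith [h1]
    have hlo : (1 - d) * Nstar x ≤ iterNnorm A γ N0 e n x := by
      have h1 : (1 - d) * g n * Nstar x ≤ iterN A γ N0 n x := by
        calc (1 - d) * g n * Nstar x ≤ Em n * Nstar x :=
              mul_le_mul_of_nonneg_right key2 hNsx
          _ ≤ iterN A γ N0 n x := hlb n x
      show (1 - d) * Nstar x ≤ iterN A γ N0 n x / g n
      rw [le_div_iff₀ hgn]
      linarith [h1]
    rw [Real.dist_eq, abs_sub_lt_iff]
    have hxB := hNsB x hx
    have hdx : d * Nstar x ≤ d * B := mul_le_mul_of_nonneg_left hxB hd0.le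
    have hexp1 : (1 + d) * Nstar x = Nstar x + d * Nstar x := by ring
    have hexp2 : (1 - d) * Nstar x = Nstar x - d * Nstar x := by ring
    rw [hexp1] at hup
    rw [hexp2] at hlo
    constructor
    · linarith
    · linarith
end

section
/- Let A_1, …, A_r be real m×m matrices, let N be a norm on ℝ^m, let ρ⁻ and ρ⁺ be real numbers such that ρ⁻·N(x) ≤ max_{1≤i≤r} N(A_i x) ≤ ρ⁺·N(x) for all x ∈ ℝ^m, let γ > 0, and define the norm N′ by N′(x) = max{N(x), γ^{-1} max_{1≤i≤r} N(A_i x)}. Then ρ⁻·N′(x) ≤ max_{1≤i≤r} N′(A_i x) ≤ ρ⁺·N′(x) for all x ∈ ℝ^m. -/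
open Matrix Filter Topology Bornology Pointwise

/-- if `ρ⁻ N x ≤ max_i N (A_i x) ≤ ρ⁺ N x` for all `x` and
`N' x = max (N x) (γ⁻¹ max_i N (A_i x))` for some `γ > 0`, then also
`ρ⁻ N' x ≤ max_i N' (A_i x) ≤ ρ⁺ N' x` for all `x`. -/
theorem stmt10 {m r : ℕ} (hm : 1 ≤ m) (hr : 1 ≤ r)
    (A : Fin r → Matrix (Fin m) (Fin m) ℝ)
    (N : (Fin m → ℝ) → ℝ) (hN : IsNorm N) (ρminus ρplus : ℝ)
    (h : ∀ x, ρminus * N x ≤ maxA A N x ∧ maxA A N x ≤ ρplus * N x)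
    (γ : ℝ) (hγ : 0 < γ)
    (N' : (Fin m → ℝ) → ℝ) (hN' : ∀ x, N' x = max (N x) (γ⁻¹ * maxA A N x)) :
    ∀ x, ρminus * N' x ≤ maxA A N' x ∧ maxA A N' x ≤ ρplus * N' x := by
  obtain ⟨hN0, hNdef, hNhom, hNadd⟩ := hN
  haveI : Nonempty (Fin r) := ⟨⟨0, hr⟩⟩
  have hbdd : ∀ (M : (Fin m → ℝ) → ℝ) (x : Fin m → ℝ),
      BddAbove (Set.range fun i : Fin r => M ((A i).mulVec x)) :=
    fun M x => (Set.finite_range _).bddAbove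
  have hmaxA_nonneg : ∀ x, 0 ≤ maxA A N x := by
    intro x
    exact le_trans (hN0 _) (le_ciSup (hbdd N x) ⟨0, hr⟩)
  have hle : ∀ i x, N ((A i).mulVec x) ≤ maxA A N x :=
    fun i x => le_ciSup (hbdd N x) i
  -- N' is nonnegative and N ≤ N', γ⁻¹ maxA ≤ N'
  have hN'1 : ∀ x, N x ≤ N' x := fun x => (hN' x) ▸ le_max_left _ _
  have hN'2 : ∀ x, γ⁻¹ * maxA A N x ≤ N' x := fun x => (hN' x) ▸ le_max_right _ _
  have hN'0 : ∀ x, 0 ≤ N' x := fun x => le_trans (hN0 x) (hN'1 x)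
  -- ρplus ≥ 0
  have hx1 : (fun _ : Fin m => (1:ℝ)) ≠ 0 := by
    intro hc
    have := congrFun hc ⟨0, hm⟩
    norm_num at this
  have hNx1 : 0 < N (fun _ => 1) := by
    rcases lt_or_eq_of_le (hN0 (fun _ => 1)) with h' | h'
    · exact h'
    · exact absurd (hNdef _ h'.symm) hx1
  have hρplus : 0 ≤ ρplus := by
    have h1 := (h (fun _ => 1)).2
    have h2 := hmaxA_nonneg (fun _ => 1)
    nlinarith
  intro x
  have hγinv : 0 ≤ γ⁻¹ := le_of_lt (inv_pos.mpr hγ)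
  constructor
  · -- lower bound
    rcases le_or_gt ρminus 0 with hρ | hρ
    · calc ρminus * N' x ≤ 0 := mul_nonpos_of_nonpos_of_nonneg hρ (hN'0 x)
        _ ≤ maxA A N' x := le_trans (hN'0 _) (le_ciSup (hbdd N' x) ⟨0, hr⟩)
    · rw [hN', mul_max_of_nonneg _ _ hρ.le]
      apply max_le
      · calc ρminus * N x ≤ maxA A N x := (h x).1
          _ ≤ maxA A N' x := ciSup_mono (hbdd N' x) (fun i => hN'1 _)
      · -- ρminus * (γ⁻¹ * maxA A N x) ≤ maxA A N' x
        have key : ∀ i, ρminus * (γ⁻¹ * N ((A i).mulVec x)) ≤ maxA A N' x := by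
          intro i
          calc ρminus * (γ⁻¹ * N ((A i).mulVec x))
              = γ⁻¹ * (ρminus * N ((A i).mulVec x)) := by ring
            _ ≤ γ⁻¹ * maxA A N ((A i).mulVec x) :=
                mul_le_mul_of_nonneg_left (h _).1 hγinv
            _ ≤ N' ((A i).mulVec x) := hN'2 _
            _ ≤ maxA A N' x := le_ciSup (hbdd N' x) i
        have : ρminus * (γ⁻¹ * maxA A N x)
            = ⨆ i, ρminus * (γ⁻¹ * N ((A i).mulVec x)) := by
          unfold maxA
          rw [Real.mul_iSup_of_nonneg hγinv, Real.mul_iSup_of_nonneg hρ.le]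
        rw [this]
        exact ciSup_le key
  · -- upper bound
    apply ciSup_le
    intro i
    rw [hN' ((A i).mulVec x)]
    apply max_le
    · calc N ((A i).mulVec x) ≤ maxA A N x := hle i x
        _ ≤ ρplus * N x := (h x).2
        _ ≤ ρplus * N' x := mul_le_mul_of_nonneg_left (hN'1 x) hρplus
    · calc γ⁻¹ * maxA A N ((A i).mulVec x)
          ≤ γ⁻¹ * (ρplus * N ((A i).mulVec x)) :=
            mul_le_mul_of_nonneg_left (h _).2 hγinv
        _ = ρplus * (γ⁻¹ * N ((A i).mulVec x)) := by ring
        _ ≤ ρplus * (γ⁻¹ * maxA A N x) :=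
            mul_le_mul_of_nonneg_left
              (mul_le_mul_of_nonneg_left (hle i x) hγinv) hρplus
        _ ≤ ρplus * N' x := mul_le_mul_of_nonneg_left (hN'2 x) hρplus
end
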